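/- arXiv:2306.05538 — 3 statements merged into one kernel-verified Lean document; each statement's English description precedes it below -/
import Mathlib

section
/- Let v_0,…,v_k ∈ ℝ_{≥0}×ℝⁿ be linearly independent vectors such that the first coordinate of v_0 is positive. For 0 ≤ i ≤ k let C_i be the cone generated by v_0,…,v_i and let P_i = {x ∈ ℝⁿ : (1,x) ∈ C_i} (so P_• = (P_0 ⊆ ⋯ ⊆ P_k) is a flag of polyhedra in ℝⁿ). Then for every (γ,u) ∈ Γ×ℤⁿ, the half-space {x ∈ ℝⁿ : γ + ⟨x,u⟩ ≤ 0} meets the relative interior of P_i for every 0 ≤ i ≤ k if and only if (⟨v_0,(γ,u)⟩, ⟨v_1,(γ,u)⟩, …, ⟨v_k,(γ,u)⟩) ≤_lex (0,…,0). -/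
open Finset

noncomputable section

/-- The pairing `⟨w,𝔲⟩ = rγ + ⟨x,u⟩` on `ℝ × ℝⁿ`. -/
def pairE {n : ℕ} (w u : ℝ × (Fin n → ℝ)) : ℝ :=
  w.1 * u.1 + ∑ i, w.2 i * u.2 i

/-- The standard pairing between `ℝⁿ` and `ℤⁿ`. -/
def pairZ {n : ℕ} (x : Fin n → ℝ) (u : Fin n → ℤ) : ℝ :=
  ∑ i, x i * (u i : ℝ)

/-- The cone generated by finitely many vectors. -/
def coneGen {V : Type*} [AddCommMonoid V] [Module ℝ V] {r : ℕ} (v : Fin r → V) : Set V :=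
  {x | ∃ lam : Fin r → ℝ, (∀ j, 0 ≤ lam j) ∧ x = ∑ j, lam j • v j}

/-- The cone generated by `v 0, …, v i` (out of the family `v`). -/
def coneGenUpTo {V : Type*} [AddCommMonoid V] [Module ℝ V] {r : ℕ} (v : Fin r → V) (i : ℕ) :
    Set V :=
  {x | ∃ lam : Fin r → ℝ, (∀ j, 0 ≤ lam j) ∧ (∀ j : Fin r, i < (j : ℕ) → lam j = 0) ∧
    x = ∑ j, lam j • v j}

/-- A strongly convex polyhedral cone: finitely generated and containing no line. -/
def IsSCPCone {V : Type*} [AddCommGroup V] [Module ℝ V] (C : Set V) : Prop :=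
  (∃ r : ℕ, ∃ v : Fin r → V, C = coneGen v) ∧ ∀ x ∈ C, -x ∈ C → x = 0

/-- The dimension of a subset of a vector space: dimension of its linear span. -/
def spanDim {V : Type*} [AddCommGroup V] [Module ℝ V] (C : Set V) : ℕ :=
  Module.finrank ℝ (Submodule.span ℝ C)

/-- `flagPrev C i` is `C (i-1)`, with the convention `C (-1) = {0}`. -/
def flagPrev {V : Type*} [Zero V] (C : ℕ → Set V) : ℕ → Set V
  | 0 => {0}
  | (i + 1) => C i

/-- A flag of cones `C 0 ⊆ ⋯ ⊆ C k` in `ℝ≥0 × ℝⁿ`, with `dim (C i) = i + 1`. -/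
def IsFlagOfCones (n k : ℕ) (C : ℕ → Set (ℝ × (Fin n → ℝ))) : Prop :=
  (∀ i ≤ k, IsSCPCone (C i)) ∧
  (∀ i ≤ k, C i ⊆ {w | 0 ≤ w.1}) ∧
  (∀ i ≤ k, spanDim (C i) = i + 1) ∧
  (∀ i, i + 1 ≤ k → C i ⊆ C (i + 1))

/-- A simplicial flag of cones: a flag of cones in which `C i` is generated by
`v 0, …, v i` for a linearly independent family `v`. -/
def IsSimplicialFlagOfCones (n k : ℕ) (C : ℕ → Set (ℝ × (Fin n → ℝ))) : Prop :=
  IsFlagOfCones n k C ∧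
  ∃ v : Fin (k + 1) → ℝ × (Fin n → ℝ), LinearIndependent ℝ v ∧ ∀ i ≤ k, C i = coneGenUpTo v i

/-- A `Γ`-admissible cone in `ℝ≥0 × ℝⁿ`. -/
def IsGammaAdmissibleCone {n : ℕ} (Γ : AddSubgroup ℝ) (D : Set (ℝ × (Fin n → ℝ))) : Prop :=
  ∃ q : ℕ, ∃ γ : Fin q → ℝ, ∃ u : Fin q → (Fin n → ℤ), (∀ l, γ l ∈ Γ) ∧
    D = {w | 0 ≤ w.1 ∧ ∀ l, w.1 * γ l + pairZ w.2 (u l) ≤ 0}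

/-- A `Γ`-rational polyhedron in `ℝⁿ`. -/
def IsGammaRatPolyhedron {n : ℕ} (Γ : AddSubgroup ℝ) (Q : Set (Fin n → ℝ)) : Prop :=
  ∃ q : ℕ, ∃ u : Fin q → (Fin n → ℤ), ∃ γ : Fin q → ℝ, (∀ l, γ l ∈ Γ) ∧
    Q = {x | ∀ l, pairZ x (u l) ≤ γ l}

/-- A polyhedron in `ℝⁿ`: a finite intersection of closed affine half-spaces. -/
def IsPolyhedron {n : ℕ} (P : Set (Fin n → ℝ)) : Prop :=
  ∃ q : ℕ, ∃ a : Fin q → (Fin n → ℝ), ∃ b : Fin q → ℝ,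
    P = {x | ∀ l, ∑ i, a l i * x i ≤ b l}

/-- A set containing no affine line. -/
def HasNoLine {n : ℕ} (P : Set (Fin n → ℝ)) : Prop :=
  ¬ ∃ x d : Fin n → ℝ, d ≠ 0 ∧ ∀ t : ℝ, x + t • d ∈ P

/-- The dimension of a polyhedron: the dimension of its affine span. -/
def polyDim {n : ℕ} (P : Set (Fin n → ℝ)) : ℕ :=
  Module.finrank ℝ (affineSpan ℝ P).direction

/-- A flag of polyhedra `P 0 ⊆ ⋯ ⊆ P k` in `ℝⁿ`: nonempty polyhedra containing no affine
line, with `dim (P i) = i`. -/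
def IsFlagOfPolyhedra (n k : ℕ) (P : ℕ → Set (Fin n → ℝ)) : Prop :=
  (∀ i ≤ k, (P i).Nonempty ∧ IsPolyhedron (P i) ∧ HasNoLine (P i) ∧ polyDim (P i) = i) ∧
  (∀ i, i + 1 ≤ k → P i ⊆ P (i + 1))

/-- The closed cone over a subset of `ℝⁿ`. -/
def closedConeOver {n : ℕ} (P : Set (Fin n → ℝ)) : Set (ℝ × (Fin n → ℝ)) :=
  closure {w : ℝ × (Fin n → ℝ) | ∃ l : ℝ, ∃ x ∈ P, 0 < l ∧ w = (l, l • x)}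

/-- A `Γ`-rational polyhedral set: a finite union of `Γ`-rational polyhedra. -/
def IsGammaRatPolyhedralSet {n : ℕ} (Γ : AddSubgroup ℝ) (U : Set (Fin n → ℝ)) : Prop :=
  ∃ m : ℕ, ∃ Q : Fin m → Set (Fin n → ℝ), (∀ j, IsGammaRatPolyhedron Γ (Q j)) ∧ U = ⋃ j, Q j

/-- A `Γ`-rational polytope: a bounded `Γ`-rational polyhedron. -/
def IsGammaRatPolytope {n : ℕ} (Γ : AddSubgroup ℝ) (Q : Set (Fin n → ℝ)) : Prop :=
  IsGammaRatPolyhedron Γ Q ∧ Bornology.IsBounded Q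

/-- A `Γ`-rational polytopal set: a finite union of `Γ`-rational polytopes. -/
def IsGammaRatPolytopalSet {n : ℕ} (Γ : AddSubgroup ℝ) (U : Set (Fin n → ℝ)) : Prop :=
  ∃ m : ℕ, ∃ Q : Fin m → Set (Fin n → ℝ), (∀ j, IsGammaRatPolytope Γ (Q j)) ∧ U = ⋃ j, Q j

/-- A prime filter on a lattice `L` of sets (ordered by inclusion, with meet = intersection
and join = union). -/
def IsPrimeFilterOn {α : Type*} (L : Set (Set α)) (F : Set (Set α)) : Prop :=
  F ⊆ L ∧ F.Nonempty ∧ F ≠ L ∧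
  (∀ U ∈ F, ∀ V ∈ L, U ⊆ V → V ∈ F) ∧
  (∀ U ∈ F, ∀ V ∈ F, U ∩ V ∈ F) ∧
  (∀ U ∈ L, ∀ V ∈ L, U ∪ V ∈ F → U ∈ F ∨ V ∈ F)

/-- `D` is a `Γ`-admissible neighborhood of the flag of cones `C 0 ⊆ ⋯ ⊆ C k`. -/
def IsGammaAdmNbhd {n : ℕ} (Γ : AddSubgroup ℝ) (k : ℕ) (C : ℕ → Set (ℝ × (Fin n → ℝ)))
    (D : Set (ℝ × (Fin n → ℝ))) : Prop :=
  IsGammaAdmissibleCone Γ D ∧ ∀ i ≤ k, (D ∩ intrinsicInterior ℝ (C i)).Nonempty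

/-- `Q` is a `Γ`-rational neighborhood of the flag of polyhedra `P 0 ⊆ ⋯ ⊆ P k`. -/
def IsGammaRatNbhd {n : ℕ} (Γ : AddSubgroup ℝ) (k : ℕ) (P : ℕ → Set (Fin n → ℝ))
    (Q : Set (Fin n → ℝ)) : Prop :=
  IsGammaRatPolyhedron Γ Q ∧ ∀ i ≤ k, (Q ∩ intrinsicInterior ℝ (P i)).Nonempty

/-- The lexicographic comparison of pairings against points `w 0, …, w k`. -/
def lexRel (n k : ℕ) (w : ℕ → ℝ × (Fin n → ℝ)) (a b : ℝ × (Fin n → ℝ)) : Prop :=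
  toLex (fun i : Fin (k + 1) => pairE (w i) a) ≤ toLex (fun i : Fin (k + 1) => pairE (w i) b)

/-- The embedding of `Γ × ℤⁿ` into `ℝ × ℝⁿ`. -/
def embGZ {n : ℕ} (Γ : AddSubgroup ℝ) (a : Γ × (Fin n → ℤ)) : ℝ × (Fin n → ℝ) :=
  ((a.1 : ℝ), fun i => (a.2 i : ℝ))

/-- The preorder on `Γ × ℤⁿ` associated to a (simplicial flag of cones with) chosen points
`w 0, …, w k`. -/
def flagRel (n k : ℕ) (Γ : AddSubgroup ℝ) (w : ℕ → ℝ × (Fin n → ℝ))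
    (a b : Γ × (Fin n → ℤ)) : Prop :=
  lexRel n k w (embGZ Γ a) (embGZ Γ b)

/-- `w` is a choice of points for the flag `C`: `w i ∈ C i \ C (i-1)` for `i ≤ k`. -/
def IsChoiceOfPoints (n k : ℕ) (C : ℕ → Set (ℝ × (Fin n → ℝ)))
    (w : ℕ → ℝ × (Fin n → ℝ)) : Prop :=
  ∀ i ≤ k, w i ∈ C i \ flagPrev C i

/-- A valuated monomial preorder on `Γ × ℤⁿ`. -/
def IsValuatedMonomialPreorder {n : ℕ} (Γ : AddSubgroup ℝ)
    (r : (Γ × (Fin n → ℤ)) → (Γ × (Fin n → ℤ)) → Prop) : Prop :=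
  (∀ a, r a a) ∧ (∀ a b c, r a b → r b c → r a c) ∧ (∀ a b, r a b ∨ r b a) ∧
  (∀ a b c, r a b → r (a + c) (b + c)) ∧
  (∀ α β : Γ, (α : ℝ) ≤ (β : ℝ) → r (α, 0) (β, 0))

/-- A Chan–Maclagan preorder on `Γ × ℤⁿ`. -/
def IsChanMaclaganPreorder {n : ℕ} (Γ : AddSubgroup ℝ)
    (r : (Γ × (Fin n → ℤ)) → (Γ × (Fin n → ℤ)) → Prop) : Prop :=
  IsValuatedMonomialPreorder Γ r ∧ ∀ a, ∃ β : Γ, r (β, 0) a ∧ ¬ r a (β, 0)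

namespace HNbhd
open Filter Topology

variable {n k : ℕ} {v : Fin (k + 1) → ℝ × (Fin n → ℝ)}
  {φ : Fin (k + 1) → (ℝ × (Fin n → ℝ)) →ₗ[ℝ] ℝ}

lemma exists_dual_family (hv : LinearIndependent ℝ v) :
    ∃ φ : Fin (k + 1) → (ℝ × (Fin n → ℝ)) →ₗ[ℝ] ℝ,
      ∀ j l, φ j (v l) = if l = j then 1 else 0 := by
  obtain ⟨W, hW⟩ := Submodule.exists_isCompl (Submodule.span ℝ (Set.range v))
  let pr := Submodule.linearProjOfIsCompl _ _ hW
  refine ⟨fun j => (Finsupp.lapply j) ∘ₗ (hv.repr : _ →ₗ[ℝ] _) ∘ₗ pr, fun j l => ?_⟩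
  have h1 : pr (v l) = ⟨v l, Submodule.subset_span (Set.mem_range_self l)⟩ :=
    Submodule.linearProjOfIsCompl_apply_left hW ⟨v l, Submodule.subset_span (Set.mem_range_self l)⟩
  simp only [LinearMap.comp_apply, h1]
  rw [hv.repr_eq_single l _ rfl]
  simp [Finsupp.single_apply]

lemma phi_sum (hφ : ∀ j l, φ j (v l) = if l = j then 1 else 0)
    (lam : Fin (k + 1) → ℝ) (j : Fin (k + 1)) :
    φ j (∑ l, lam l • v l) = lam j := by
  rw [map_sum]
  simp only [map_smul, hφ, smul_eq_mul, mul_ite, mul_one, mul_zero]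
  simp

lemma mem_P_coeffs (hφ : ∀ j l, φ j (v l) = if l = j then 1 else 0)
    {i : ℕ} {w : ℝ × (Fin n → ℝ)} (hw : w ∈ coneGenUpTo v i) :
    (∀ j : Fin (k + 1), 0 ≤ φ j w) ∧ (∀ j : Fin (k + 1), i < (j : ℕ) → φ j w = 0) ∧
      w = ∑ l, φ l w • v l := by
  obtain ⟨lam, h0, hsupp, rfl⟩ := hw
  have hc : ∀ j, φ j (∑ l, lam l • v l) = lam j := phi_sum hφ lam
  exact ⟨fun j => by rw [hc]; exact h0 j, fun j hj => by rw [hc]; exact hsupp j hj,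
    Finset.sum_congr rfl fun l _ => by rw [hc]⟩

lemma one_x_eq (lam : Fin (k + 1) → ℝ) (hsum : ∑ j, lam j * (v j).1 = 1) :
    ((1 : ℝ), ∑ j, lam j • (v j).2) = ∑ j, lam j • v j := by
  rw [Prod.ext_iff]
  constructor
  · rw [Prod.fst_sum]
    simp only [Prod.smul_fst, smul_eq_mul]
    exact hsum.symm
  · rw [Prod.snd_sum]
    simp

/-- The defect map `w ↦ w - ∑_{j ≤ i} φ j w • v j`. -/
def Gmap (φ : Fin (k + 1) → (ℝ × (Fin n → ℝ)) →ₗ[ℝ] ℝ) (v : Fin (k + 1) → ℝ × (Fin n → ℝ))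
    (i : ℕ) : (ℝ × (Fin n → ℝ)) →ₗ[ℝ] (ℝ × (Fin n → ℝ)) :=
  LinearMap.id - ∑ j ∈ univ.filter (fun j : Fin (k + 1) => (j : ℕ) ≤ i), (φ j).smulRight (v j)

lemma Gmap_apply (i : ℕ) (w : ℝ × (Fin n → ℝ)) :
    Gmap φ v i w = w - ∑ j ∈ univ.filter (fun j : Fin (k + 1) => (j : ℕ) ≤ i),
      φ j w • v j := by
  simp [Gmap, LinearMap.sub_apply, LinearMap.sum_apply]

lemma mem_cone_of_G (i : ℕ) {w : ℝ × (Fin n → ℝ)} (hG : Gmap φ v i w = 0)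
    (hpos : ∀ j : Fin (k + 1), (j : ℕ) ≤ i → 0 ≤ φ j w) :
    w ∈ coneGenUpTo v i := by
  rw [Gmap_apply, sub_eq_zero] at hG
  refine ⟨fun l => if (l : ℕ) ≤ i then φ l w else 0, ?_, ?_, ?_⟩
  · intro j
    dsimp only
    split
    · exact hpos j ‹_›
    · exact le_refl 0
  · intro j hj
    dsimp only
    rw [if_neg (Nat.not_le.2 hj)]
  · dsimp only
    simp only [ite_smul, zero_smul]
    rw [← Finset.sum_filter]
    exact hG

/-- The affine map `x ↦ Gmap φ v i (1, x)`. -/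
def Fmap (φ : Fin (k + 1) → (ℝ × (Fin n → ℝ)) →ₗ[ℝ] ℝ) (v : Fin (k + 1) → ℝ × (Fin n → ℝ))
    (i : ℕ) : (Fin n → ℝ) →ᵃ[ℝ] (ℝ × (Fin n → ℝ)) :=
  AffineMap.mk' (fun x => Gmap φ v i ((1 : ℝ), x))
    ((Gmap φ v i).comp (LinearMap.inr ℝ ℝ (Fin n → ℝ))) 0 (by
      intro p
      simp only [vsub_eq_sub, sub_zero, vadd_eq_add, LinearMap.comp_apply, LinearMap.inr_apply]
      rw [← map_add]
      congr 1
      ext <;> simp)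

lemma G_eq_zero_of_mem_affineSpan (hφ : ∀ j l, φ j (v l) = if l = j then 1 else 0) (i : ℕ)
    {x : Fin n → ℝ} (hx : x ∈ affineSpan ℝ {z : Fin n → ℝ | ((1 : ℝ), z) ∈ coneGenUpTo v i}) :
    Gmap φ v i ((1 : ℝ), x) = 0 := by
  set T : AffineSubspace ℝ (Fin n → ℝ) :=
    AffineSubspace.comap (Fmap φ v i) (AffineSubspace.mk' 0 (⊥ : Submodule ℝ (ℝ × (Fin n → ℝ))))
  have hsub : {z : Fin n → ℝ | ((1 : ℝ), z) ∈ coneGenUpTo v i} ⊆ (T : Set (Fin n → ℝ)) := by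
    intro y hy
    obtain ⟨-, hz, hrep⟩ := mem_P_coeffs hφ hy
    have : Gmap φ v i ((1 : ℝ), y) = 0 := by
      rw [Gmap_apply]
      have hsum : ∑ l ∈ univ.filter (fun j : Fin (k + 1) => (j : ℕ) ≤ i),
          φ l ((1 : ℝ), y) • v l = ∑ l, φ l ((1 : ℝ), y) • v l := by
        refine Finset.sum_subset (Finset.filter_subset _ _) ?_
        intro l _ hl
        simp only [mem_filter, mem_univ, true_and, not_le] at hl
        rw [hz l hl, zero_smul]
      rw [hsum, ← hrep, sub_self]
    show Fmap φ v i y ∈ AffineSubspace.mk' 0 (⊥ : Submodule ℝ (ℝ × (Fin n → ℝ)))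
    rw [AffineSubspace.mem_mk']
    simpa [Fmap] using this
  have hle := affineSpan_le.2 hsub
  have h2 : Fmap φ v i x ∈
      AffineSubspace.mk' (0 : ℝ × (Fin n → ℝ)) (⊥ : Submodule ℝ (ℝ × (Fin n → ℝ))) := hle hx
  rw [AffineSubspace.mem_mk'] at h2
  simpa [Fmap] using h2

lemma continuous_phi (j : Fin (k + 1)) :
    Continuous fun y : Fin n → ℝ => φ j ((1 : ℝ), y) :=
  (φ j).continuous_of_finiteDimensional.comp (continuous_const.prodMk continuous_id)

lemma strict_mem_intrinsicInterior (hφ : ∀ j l, φ j (v l) = if l = j then 1 else 0) (i : ℕ)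
    {x : Fin n → ℝ} (hx : ((1 : ℝ), x) ∈ coneGenUpTo v i)
    (hpos : ∀ j : Fin (k + 1), (j : ℕ) ≤ i → 0 < φ j ((1 : ℝ), x)) :
    x ∈ intrinsicInterior ℝ {z : Fin n → ℝ | ((1 : ℝ), z) ∈ coneGenUpTo v i} := by
  set Pi := {z : Fin n → ℝ | ((1 : ℝ), z) ∈ coneGenUpTo v i} with hPidef
  have hxP : x ∈ Pi := hx
  have hxE : x ∈ affineSpan ℝ Pi := subset_affineSpan ℝ _ hxP
  rw [mem_intrinsicInterior]
  refine ⟨⟨x, hxE⟩, ?_, rfl⟩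
  set W : Set (Fin n → ℝ) := {y | ∀ j : Fin (k + 1), (j : ℕ) ≤ i → 0 < φ j ((1 : ℝ), y)}
    with hWdef
  have hWopen : IsOpen W := by
    have : W = ⋂ j ∈ univ.filter (fun j : Fin (k + 1) => (j : ℕ) ≤ i),
        {y : Fin n → ℝ | 0 < φ j ((1 : ℝ), y)} := by
      ext y; simp [hWdef]
    rw [this]
    exact isOpen_biInter_finset fun j _ =>
      isOpen_lt continuous_const (continuous_phi j)
  refine mem_interior.2 ⟨Subtype.val ⁻¹' W, ?_, hWopen.preimage continuous_subtype_val, ?_⟩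
  · rintro ⟨y, hyE⟩ hy
    exact mem_cone_of_G i (G_eq_zero_of_mem_affineSpan hφ i hyE) fun j hj => (hy j hj).le
  · exact hpos

lemma sum_eq_head_add (i : ℕ) (f : Fin (k + 1) → ℝ)
    (hz : ∀ j : Fin (k + 1), j ≠ 0 → ¬(j : ℕ) ≤ i → f j = 0) :
    ∑ j, f j = f 0 + ∑ j ∈ (univ.erase 0).filter (fun j : Fin (k + 1) => (j : ℕ) ≤ i), f j := by
  rw [← Finset.add_sum_erase _ f (mem_univ 0)]
  congr 1
  exact (Finset.sum_filter_of_ne fun x hx hfx => by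
    by_contra h; exact hfx (hz x (Finset.ne_of_mem_erase hx) h)).symm

lemma lam_sum (i : ℕ) (g : Fin (k + 1) → ℝ) (r : ℝ) (w : Fin (k + 1) → ℝ) :
    ∑ j : Fin (k + 1), (if j = 0 then r else if (j : ℕ) ≤ i then g j else 0) * w j
      = r * w 0 + ∑ j ∈ (univ.erase 0).filter (fun j : Fin (k + 1) => (j : ℕ) ≤ i),
          g j * w j := by
  rw [sum_eq_head_add i _ ?_]
  · have hhead : (if (0 : Fin (k + 1)) = 0 then r
        else if ((0 : Fin (k + 1)) : ℕ) ≤ i then g 0 else 0) = r := by simp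
    rw [hhead]
    congr 1
    refine Finset.sum_congr rfl fun j hj => ?_
    rw [Finset.mem_filter, Finset.mem_erase] at hj
    rw [if_neg hj.1.1, if_pos hj.2]
  · intro j hj0 hji
    rw [if_neg hj0, if_neg hji, zero_mul]

lemma exists_strict (hv0 : 0 < (v 0).1) (hvpos : ∀ j, 0 ≤ (v j).1) (i : ℕ) :
    ∃ lam : Fin (k + 1) → ℝ, (∀ j : Fin (k + 1), (j : ℕ) ≤ i → 0 < lam j) ∧
      (∀ j : Fin (k + 1), i < (j : ℕ) → lam j = 0) ∧ ∑ j, lam j * (v j).1 = 1 := by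
  set t := (univ.erase (0 : Fin (k + 1))).filter (fun j : Fin (k + 1) => (j : ℕ) ≤ i) with ht
  set A := ∑ j ∈ t, (v j).1 with hA
  have hA0 : 0 ≤ A := Finset.sum_nonneg fun j _ => hvpos j
  set ε := 1 / (2 * (A + 1)) with hε
  have hεpos : 0 < ε := by positivity
  have hεA : ε * A < 1 := by
    rw [hε, div_mul_eq_mul_div, div_lt_one (by positivity)]
    nlinarith
  refine ⟨fun j => if j = 0 then (1 - ε * A) / (v 0).1 else if (j : ℕ) ≤ i then ε else 0,
    ?_, ?_, ?_⟩
  · intro j hj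
    dsimp only
    by_cases h0 : j = 0
    · rw [if_pos h0]; exact div_pos (by linarith) hv0
    · rw [if_neg h0, if_pos hj]; exact hεpos
  · intro j hj
    dsimp only
    rw [if_neg, if_neg (Nat.not_le.2 hj)]
    intro h0
    rw [h0] at hj
    simp at hj
  · try dsimp only
    rw [lam_sum i (fun _ => ε) _ (fun j => (v j).1), ← ht]
    try dsimp only
    rw [← Finset.mul_sum, ← hA, div_mul_cancel₀ _ (ne_of_gt hv0)]
    ring

lemma exists_neg (hv0 : 0 < (v 0).1) (hvpos : ∀ j, 0 ≤ (v j).1)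
    (c : Fin (k + 1) → ℝ) (m : Fin (k + 1)) (hc0 : ∀ j, j < m → c j = 0) (hcm : c m < 0)
    (i : ℕ) (hmi : (m : ℕ) ≤ i) :
    ∃ lam : Fin (k + 1) → ℝ, (∀ j : Fin (k + 1), (j : ℕ) ≤ i → 0 < lam j) ∧
      (∀ j : Fin (k + 1), i < (j : ℕ) → lam j = 0) ∧ (∑ j, lam j * (v j).1 = 1) ∧
      ∑ j, lam j * c j ≤ 0 := by
  set t := (univ.erase (0 : Fin (k + 1))).filter (fun j : Fin (k + 1) => (j : ℕ) ≤ i) with ht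
  set q : ℝ → Fin (k + 1) → ℝ := fun ε j => if j = m then ε else ε ^ 2 with hq
  set R : ℝ → ℝ := fun ε => ∑ j ∈ t, q ε j * (v j).1 with hR
  have hq0 : ∀ j, Tendsto (fun ε : ℝ => q ε j) (𝓝 0) (𝓝 0) := by
    intro j
    by_cases hjm : j = m
    · simp only [hq, if_pos hjm]; exact tendsto_id
    · simpa [hq, hjm] using ((tendsto_id : Tendsto (fun ε : ℝ => ε) (𝓝 0) (𝓝 0)).pow 2)
  have hR0 : Tendsto R (𝓝 0) (𝓝 0) := by
    have := tendsto_finset_sum t (fun j (_ : j ∈ t) => (hq0 j).mul_const ((v j).1))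
    simpa [hR] using this
  have e1 : ∀ᶠ ε in 𝓝[>] (0 : ℝ), 0 < ε := eventually_mem_nhdsWithin
  have e2 : ∀ᶠ ε in 𝓝[>] (0 : ℝ), R ε < 1 :=
    (hR0.mono_left nhdsWithin_le_nhds).eventually_lt_const one_pos
  have key : ∀ ε : ℝ, ∑ j ∈ t, q ε j * c j =
      (if m ∈ t then ε * c m - ε ^ 2 * c m else 0) + ε ^ 2 * ∑ j ∈ t, c j := by
    intro ε
    rw [Finset.mul_sum]
    by_cases hmt : m ∈ t
    · rw [if_pos hmt, ← Finset.add_sum_erase _ (fun j => q ε j * c j) hmt,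
        ← Finset.add_sum_erase _ (fun j => ε ^ 2 * c j) hmt]
      have h1 : ∀ j ∈ t.erase m, q ε j * c j = ε ^ 2 * c j := by
        intro j hj
        simp only [hq]
        rw [if_neg (Finset.ne_of_mem_erase hj)]
      rw [Finset.sum_congr rfl h1]
      have h2 : q ε m = ε := by simp [hq]
      rw [h2]
      ring
    · rw [if_neg hmt, zero_add]
      refine Finset.sum_congr rfl fun j hj => ?_
      have hjm : j ≠ m := fun h => hmt (h ▸ hj)
      simp only [hq]
      rw [if_neg hjm]
  have e3 : ∀ᶠ ε in 𝓝[>] (0 : ℝ),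
      ((1 - R ε) / (v 0).1) * c 0 + ∑ j ∈ t, q ε j * c j ≤ 0 := by
    by_cases hm : m = 0
    · -- c 0 < 0, dominant term (1-Rε)/a0 * c0
      have hc00 : c 0 < 0 := hm ▸ hcm
      have hmt : m ∉ t := by
        rw [hm]
        simp [ht]
      have hlim : Tendsto (fun ε : ℝ => ((1 - R ε) / (v 0).1) * c 0 + ∑ j ∈ t, q ε j * c j)
          (𝓝 0) (𝓝 (((1 - 0) / (v 0).1) * c 0 + 0 ^ 2 * ∑ j ∈ t, c j)) := by
        simp only [key, if_neg hmt, zero_add]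
        refine Tendsto.add
          (Tendsto.mul_const _ (Tendsto.div_const (Tendsto.sub tendsto_const_nhds hR0) _)) ?_
        exact ((tendsto_id : Tendsto (fun ε : ℝ => ε) (𝓝 0) (𝓝 0)).pow 2).mul_const _
      have hneg : ((1 - 0) / (v 0).1) * c 0 + 0 ^ 2 * ∑ j ∈ t, c j < 0 := by
        have h3 : (0:ℝ) < (1 - 0) / (v 0).1 := by
          rw [sub_zero]
          exact div_pos one_pos hv0
        nlinarith
      exact ((hlim.mono_left nhdsWithin_le_nhds).eventually_le_const hneg)
    · -- m ≠ 0 : c 0 = 0, dominant term ε * c m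
      have hc00 : c 0 = 0 := hc0 0 (Fin.pos_of_ne_zero hm)
      have hmt : m ∈ t := by
        simp only [ht, Finset.mem_filter, Finset.mem_erase, Finset.mem_univ, and_true, true_and]
        exact ⟨hm, hmi⟩
      have hfac : ∀ ε : ℝ, ((1 - R ε) / (v 0).1) * c 0 + ∑ j ∈ t, q ε j * c j
          = ε * (c m - ε * c m + ε * ∑ j ∈ t, c j) := by
        intro ε
        rw [hc00, key, if_pos hmt]
        ring
      have hlim2 : Tendsto (fun ε : ℝ => c m - ε * c m + ε * ∑ j ∈ t, c j) (𝓝 0)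
          (𝓝 (c m - 0 * c m + 0 * ∑ j ∈ t, c j)) := by
        refine Tendsto.add (Tendsto.sub tendsto_const_nhds (Tendsto.mul_const _ tendsto_id)) ?_
        exact Tendsto.mul_const _ tendsto_id
      have hev := (hlim2.mono_left (nhdsWithin_le_nhds (a := (0:ℝ)) (s := Set.Ioi 0))).eventually_lt_const
        (show c m - 0 * c m + 0 * ∑ j ∈ t, c j < 0 by simpa using hcm)
      filter_upwards [hev, e1] with ε hε1 hε2
      rw [hfac]
      exact (mul_neg_of_pos_of_neg hε2 hε1).le
  obtain ⟨ε, hε1, hε2, hε3⟩ := (e1.and (e2.and e3)).exists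
  refine ⟨fun j => if j = 0 then (1 - R ε) / (v 0).1 else if (j : ℕ) ≤ i then q ε j else 0,
    ?_, ?_, ?_, ?_⟩
  · intro j hj
    dsimp only
    by_cases h0 : j = 0
    · rw [if_pos h0]; exact div_pos (by linarith) hv0
    · rw [if_neg h0, if_pos hj]
      simp only [hq]
      by_cases hjm : j = m
      · rw [if_pos hjm]; exact hε1
      · rw [if_neg hjm]; positivity
  · intro j hj
    dsimp only
    rw [if_neg, if_neg (Nat.not_le.2 hj)]
    intro h0
    rw [h0] at hj
    simp at hj
  · try dsimp only
    rw [lam_sum i (q ε) _ (fun j => (v j).1), ← ht]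
    try dsimp only
    rw [div_mul_cancel₀ _ (ne_of_gt hv0)]
    show (1:ℝ) - R ε + R ε = 1
    ring
  · try dsimp only
    rw [lam_sum i (q ε) _ c, ← ht]
    exact hε3

/-- The pairing with `(γ, u)` as a linear map. -/
def pairL (n : ℕ) (γ : ℝ) (u : Fin n → ℤ) : (ℝ × (Fin n → ℝ)) →ₗ[ℝ] ℝ where
  toFun w := pairE w (γ, fun t => (u t : ℝ))
  map_add' w₁ w₂ := by
    simp only [pairE, Prod.fst_add, Prod.snd_add, Pi.add_apply, add_mul,
      Finset.sum_add_distrib]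
    ring
  map_smul' r w := by
    simp only [pairE, Prod.smul_fst, Prod.smul_snd, Pi.smul_apply, smul_eq_mul,
      RingHom.id_apply, mul_add, Finset.mul_sum, mul_assoc]

lemma pairL_one (γ : ℝ) (u : Fin n → ℤ) (x : Fin n → ℝ) :
    pairL n γ u ((1 : ℝ), x) = γ + pairZ x u := by
  simp [pairL, pairE, pairZ]

lemma pairL_sum (γ : ℝ) (u : Fin n → ℤ) (lam : Fin (k + 1) → ℝ)
    (hsum : ∑ j, lam j * (v j).1 = 1) :
    γ + pairZ (∑ j, lam j • (v j).2) u
      = ∑ j, lam j * pairE (v j) (γ, fun t => (u t : ℝ)) := by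
  rw [← pairL_one, one_x_eq lam hsum, map_sum]
  exact Finset.sum_congr rfl fun j _ => by rw [map_smul, smul_eq_mul]; rfl

lemma pos_of_mem_intrinsicInterior (hφ : ∀ j l, φ j (v l) = if l = j then 1 else 0)
    (hv0 : 0 < (v 0).1) (hvpos : ∀ j, 0 ≤ (v j).1) (i : ℕ) {x : Fin n → ℝ}
    (hx : x ∈ intrinsicInterior ℝ {z : Fin n → ℝ | ((1 : ℝ), z) ∈ coneGenUpTo v i}) :
    ∀ j : Fin (k + 1), (j : ℕ) ≤ i → 0 < φ j ((1 : ℝ), x) := by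
  set Pi := {z : Fin n → ℝ | ((1 : ℝ), z) ∈ coneGenUpTo v i} with hPidef
  obtain ⟨x', hx'int, hx'val⟩ := mem_intrinsicInterior.mp hx
  have hxP : x ∈ Pi := intrinsicInterior_subset hx
  obtain ⟨hge, -, -⟩ := mem_P_coeffs hφ hxP
  obtain ⟨mu, hmupos, hmuzero, hmusum⟩ := exists_strict hv0 hvpos i
  set y := ∑ l, mu l • (v l).2 with hy
  have hy1 : ((1 : ℝ), y) = ∑ l, mu l • v l := one_x_eq mu hmusum
  have hyP : y ∈ Pi := by
    refine ⟨mu, fun j => ?_, hmuzero, hy1⟩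
    rcases le_or_gt (j : ℕ) i with h | h
    · exact (hmupos j h).le
    · rw [hmuzero j h]
  have hyφ : ∀ j, φ j ((1 : ℝ), y) = mu j := fun j => by rw [hy1, phi_sum hφ]
  intro j hj
  rcases (hge j).lt_or_eq with hlt | heq
  · exact hlt
  · exfalso
    have hxE : x ∈ affineSpan ℝ Pi := subset_affineSpan ℝ _ hxP
    have hyE : y ∈ affineSpan ℝ Pi := subset_affineSpan ℝ _ hyP
    have hmem : ∀ s : ℝ, x + s • (x - y) ∈ affineSpan ℝ Pi := by
      intro s
      have := AffineSubspace.smul_vsub_vadd_mem (affineSpan ℝ Pi) s hxE hyE hxE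
      simpa [vsub_eq_sub, vadd_eq_add, add_comm] using this
    set cv : ℝ → (affineSpan ℝ Pi : Set (Fin n → ℝ)) := fun s => ⟨x + s • (x - y), hmem s⟩
      with hcv
    have hcont : Continuous cv := by
      refine Continuous.subtype_mk ?_ _
      fun_prop
    have hc0 : cv 0 = x' := by
      apply Subtype.ext
      simp [hcv, hx'val]
    have hev : ∀ᶠ s in 𝓝 (0 : ℝ), cv s ∈
        interior ((Subtype.val) ⁻¹' Pi : Set (affineSpan ℝ Pi)) := by
      refine hcont.continuousAt.eventually_mem ?_
      rw [hc0]
      exact isOpen_interior.mem_nhds hx'int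
    have hev' : ∀ᶠ s in 𝓝[>] (0 : ℝ), (x + s • (x - y)) ∈ Pi ∧ 0 < s := by
      refine Filter.Eventually.and ?_ eventually_mem_nhdsWithin
      refine (hev.filter_mono nhdsWithin_le_nhds).mono fun s hs => ?_
      have h5 : cv s ∈ (Subtype.val ⁻¹' Pi : Set (affineSpan ℝ Pi)) := interior_subset hs
      exact h5
    obtain ⟨s, hzP, hs⟩ := hev'.exists
    have hsplit : ((1 : ℝ), x + s • (x - y))
        = ((1 : ℝ), x) + s • (((1 : ℝ), x) - ((1 : ℝ), y)) := by
      refine Prod.ext ?_ ?_ <;> simp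
    have hφz : φ j ((1 : ℝ), x + s • (x - y)) = - (s * mu j) := by
      rw [hsplit, map_add, map_smul, map_sub, ← heq, hyφ]
      simp only [smul_eq_mul]
      ring
    have hzge : 0 ≤ φ j ((1 : ℝ), x + s • (x - y)) := (mem_P_coeffs hφ hzP).1 j
    rw [hφz] at hzge
    have : 0 < s * mu j := mul_pos hs (hmupos j hj)
    linarith

end HNbhd

/-- For a flag of polyhedra obtained by slicing a simplicial flag of cones (whose
first generator has positive first coordinate), a `Γ`-rational half-space
`{x | γ + ⟨x,u⟩ ≤ 0}` meets the relative interior of every member of the flag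
iff `(⟨v 0,(γ,u)⟩, …, ⟨v k,(γ,u)⟩) ≤_lex 0`. -/
theorem halfspace_nbhd_iff_lex_nonpos
    (n k : ℕ) (hn : 1 ≤ n) (Γ : AddSubgroup ℝ) (hΓ : Γ ≠ ⊥)
    (v : Fin (k + 1) → ℝ × (Fin n → ℝ)) (hv : LinearIndependent ℝ v)
    (hvpos : ∀ i, 0 ≤ (v i).1) (hv0 : 0 < (v 0).1)
    (P : ℕ → Set (Fin n → ℝ))
    (hP : ∀ i, P i = {x : Fin n → ℝ | ((1 : ℝ), x) ∈ coneGenUpTo v i})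
    (γ : ℝ) (hγ : γ ∈ Γ) (u : Fin n → ℤ) :
    (∀ i ≤ k, ({x : Fin n → ℝ | γ + pairZ x u ≤ 0} ∩
        intrinsicInterior ℝ (P i)).Nonempty) ↔
      toLex (fun i : Fin (k + 1) => pairE (v i) (γ, fun t => (u t : ℝ))) ≤
        toLex (0 : Fin (k + 1) → ℝ) := by
  obtain ⟨φ, hφ⟩ := HNbhd.exists_dual_family hv
  set c : Fin (k + 1) → ℝ := fun j => pairE (v j) (γ, fun t => (u t : ℝ)) with hc
  have build : ∀ i ≤ k, ∀ lam : Fin (k + 1) → ℝ,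
      (∀ j : Fin (k + 1), (j : ℕ) ≤ i → 0 < lam j) →
      (∀ j : Fin (k + 1), i < (j : ℕ) → lam j = 0) →
      (∑ j, lam j * (v j).1 = 1) → (∑ j, lam j * c j ≤ 0) →
      ({x : Fin n → ℝ | γ + pairZ x u ≤ 0} ∩ intrinsicInterior ℝ (P i)).Nonempty := by
    intro i hik lam hpos hzero hsum hneg
    set x := ∑ j, lam j • (v j).2 with hx
    have h1 : ((1 : ℝ), x) = ∑ j, lam j • v j := HNbhd.one_x_eq lam hsum
    have hxP : ((1 : ℝ), x) ∈ coneGenUpTo v i := by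
      refine ⟨lam, fun j => ?_, hzero, h1⟩
      rcases le_or_gt (j : ℕ) i with h | h
      · exact (hpos j h).le
      · rw [hzero j h]
    refine ⟨x, ?_, ?_⟩
    · show γ + pairZ x u ≤ 0
      rw [hx, HNbhd.pairL_sum γ u lam hsum]
      exact hneg
    · rw [hP i]
      refine HNbhd.strict_mem_intrinsicInterior hφ i hxP fun j hj => ?_
      have h2 := HNbhd.phi_sum hφ lam j
      rw [← h1] at h2
      rw [h2]
      exact hpos j hj
  constructor
  · intro hall
    by_contra hle
    have tri := (haveI := (Pi.isTrichotomous_lex (fun a b : Fin (k + 1) => a < b)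
      (s := fun {i} (a b : ℝ) => a < b) (IsWellFounded.wf)); trichotomous_of
      (r := Pi.Lex (fun a b : Fin (k + 1) => a < b) (fun {i} (a b : ℝ) => a < b)) c 0)
    rcases tri with hlt' | heq' | hgt'
    · exact hle (le_of_lt (show toLex c < toLex 0 from hlt'))
    · exact hle (le_of_eq (congrArg toLex heq'))
    obtain ⟨m, hm0, hmlt⟩ := hgt'
    have hcm : 0 < c m := by simpa using hmlt
    have hmk : (m : ℕ) ≤ k := Nat.lt_succ_iff.mp m.isLt
    obtain ⟨x, hxH, hxI⟩ := hall (m : ℕ) hmk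
    rw [hP (m : ℕ)] at hxI
    have hxPmem : x ∈ {z : Fin n → ℝ | ((1 : ℝ), z) ∈ coneGenUpTo v (m : ℕ)} :=
      intrinsicInterior_subset hxI
    have hxP : ((1 : ℝ), x) ∈ coneGenUpTo v (m : ℕ) := hxPmem
    obtain ⟨hge, hzero, hrep⟩ := HNbhd.mem_P_coeffs hφ hxP
    have hpos := HNbhd.pos_of_mem_intrinsicInterior hφ hv0 hvpos (m : ℕ) hxI m le_rfl
    have hval : γ + pairZ x u = ∑ j, φ j ((1 : ℝ), x) * c j := by
      calc γ + pairZ x u = HNbhd.pairL n γ u ((1 : ℝ), x) := (HNbhd.pairL_one γ u x).symm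
        _ = ∑ j, φ j ((1 : ℝ), x) * c j := by
            conv_lhs => rw [hrep]
            rw [map_sum]
            exact Finset.sum_congr rfl fun j _ => by rw [map_smul, smul_eq_mul]; rfl
    have hsingle : ∑ j, φ j ((1 : ℝ), x) * c j = φ m ((1 : ℝ), x) * c m := by
      refine Finset.sum_eq_single m ?_ (by simp)
      intro l _ hlm
      rcases lt_or_gt_of_ne hlm with h | h
      · have : c l = 0 := by simpa using (hm0 l h).symm
        rw [this, mul_zero]
      · rw [hzero l (Fin.lt_def.mp h), zero_mul]
    have hxH' : γ + pairZ x u ≤ 0 := hxH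
    have : 0 < φ m ((1 : ℝ), x) * c m := mul_pos hpos hcm
    rw [hval, hsingle] at hxH'
    exact absurd hxH' (not_le.mpr this)
  · intro hlex i hik
    rcases eq_or_lt_of_le hlex with heq | hlt
    · have hc0 : ∀ j, c j = 0 := fun j => congrFun (toLex_inj.mp heq) j
      obtain ⟨lam, h1, h2, h3⟩ := HNbhd.exists_strict hv0 hvpos i
      refine build i hik lam h1 h2 h3 (le_of_eq (Finset.sum_eq_zero fun j _ => ?_))
      rw [hc0 j, mul_zero]
    · obtain ⟨m, hm0, hmlt⟩ := hlt
      have hcm : c m < 0 := by simpa using hmlt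
      have hc0' : ∀ j, j < m → c j = 0 := fun j hj => by simpa using hm0 j hj
      rcases le_or_gt (m : ℕ) i with hmi | him
      · obtain ⟨lam, h1, h2, h3, h4⟩ := HNbhd.exists_neg hv0 hvpos c m hc0' hcm i hmi
        exact build i hik lam h1 h2 h3 h4
      · obtain ⟨lam, h1, h2, h3⟩ := HNbhd.exists_strict hv0 hvpos i
        refine build i hik lam h1 h2 h3 (le_of_eq (Finset.sum_eq_zero fun j _ => ?_))
        rcases le_or_gt (j : ℕ) i with h | h
        · rw [hc0' j (Fin.lt_def.mpr (lt_of_le_of_lt h him)), mul_zero]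
        · rw [h2 j h, zero_mul]


end
end

section
/- Let P_• be a flag of polyhedra in ℝⁿ with c(P_•) simplicial, and let ⪯ = ⪯_{P_•} be the associated preorder on Γ×ℤⁿ. Then ⪯ is antisymmetric (i.e. 𝔲 ⪯ 𝔳 and 𝔳 ⪯ 𝔲 together imply 𝔲 = 𝔳, so that ⪯ is a valuated monomial order) if and only if there exists a complete flag of polyhedra P_•' = (P'_0 ⊆ P'_1 ⊆ ⋯ ⊆ P'_n) in ℝⁿ (of length n = dim ℝⁿ) with c(P_•') simplicial and ⪯ = ⪯_{P_•'}. -/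
open Finset

noncomputable section

section LexAux

/-- lex lt characterization -/
lemma lex_lt_iff' {m : ℕ} (f g : Fin m → ℝ) :
    toLex f < toLex g ↔ ∃ i, (∀ j, j < i → f j = g j) ∧ f i < g i := Iff.rfl

lemma lex_le_iff' {m : ℕ} (f g : Fin m → ℝ) :
    toLex f ≤ toLex g ↔ toLex f < toLex g ∨ f = g := by
  rw [le_iff_lt_or_eq]
  exact or_congr Iff.rfl ⟨fun h => congrArg ofLex h, fun h => congrArg toLex h⟩

/-- If `f` and `g` agree strictly below `i₀` and differ at `i₀`, then lex `≤` is equivalent to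
`<` at `i₀`. -/
lemma lex_le_char {m : ℕ} (f g : Fin (m + 1) → ℝ) (i₀ : ℕ) (hi₀ : i₀ ≤ m)
    (heq : ∀ j : Fin (m + 1), (j : ℕ) < i₀ → f j = g j)
    (hne : f ⟨i₀, by omega⟩ ≠ g ⟨i₀, by omega⟩) :
    (toLex f ≤ toLex g ↔ f ⟨i₀, by omega⟩ < g ⟨i₀, by omega⟩) := by
  set I : Fin (m+1) := ⟨i₀, by omega⟩ with hI
  rw [lex_le_iff']
  constructor
  · rintro (⟨j, hj, hlt⟩ | h)
    · rcases lt_trichotomy (j : ℕ) i₀ with h1 | h1 | h1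
      · exact absurd (heq j h1) (ne_of_lt hlt)
      · have : j = I := Fin.ext h1
        rwa [this] at hlt
      · exact absurd (hj I (by simpa [hI, Fin.lt_def] using h1)) hne
    · exact absurd (congrFun h I) hne
  · intro h
    exact Or.inl ⟨I, fun j hj => heq j (by simpa [Fin.lt_def, hI] using hj), h⟩

end LexAux

section PairAux

variable {n : ℕ}

lemma pairE_sub (w a b : ℝ × (Fin n → ℝ)) : pairE w (a - b) = pairE w a - pairE w b := by
  simp only [pairE, Prod.fst_sub, Prod.snd_sub, Pi.sub_apply]
  have : ∑ i, w.2 i * (a.2 i - b.2 i) = ∑ i, w.2 i * a.2 i - ∑ i, w.2 i * b.2 i := by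
    rw [← Finset.sum_sub_distrib]; exact Finset.sum_congr rfl fun i _ => by ring
  rw [this]; ring

/-- The set of `w` pairing to zero with a fixed `x` is a submodule. -/
def pairKer (x : ℝ × (Fin n → ℝ)) : Submodule ℝ (ℝ × (Fin n → ℝ)) where
  carrier := {w | pairE w x = 0}
  add_mem' := by
    intro a b ha hb
    simp only [Set.mem_setOf_eq, pairE, Prod.fst_add, Prod.snd_add, Pi.add_apply] at *
    have : ∑ i, (a.2 i + b.2 i) * x.2 i = ∑ i, a.2 i * x.2 i + ∑ i, b.2 i * x.2 i := by
      rw [← Finset.sum_add_distrib]; exact Finset.sum_congr rfl fun i _ => by ring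
    rw [this]; linarith
  zero_mem' := by simp [pairE]
  smul_mem' := by
    intro c a ha
    simp only [Set.mem_setOf_eq, pairE, Prod.smul_fst, Prod.smul_snd, Pi.smul_apply,
      smul_eq_mul] at *
    have : ∑ i, c * a.2 i * x.2 i = c * ∑ i, a.2 i * x.2 i := by
      rw [Finset.mul_sum]; exact Finset.sum_congr rfl fun i _ => by ring
    rw [this, mul_assoc, ← mul_add, ha, mul_zero]

lemma pairE_self_eq_zero {x : ℝ × (Fin n → ℝ)} (h : pairE x x = 0) : x = 0 := by
  have h1 : x.1 * x.1 + ∑ i, x.2 i * x.2 i = 0 := h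
  have hsq : ∀ i ∈ Finset.univ (α := Fin n), (0:ℝ) ≤ x.2 i * x.2 i := fun i _ => mul_self_nonneg _
  have hs : (0:ℝ) ≤ ∑ i, x.2 i * x.2 i := Finset.sum_nonneg hsq
  have h2 : x.1 * x.1 = 0 ∧ ∑ i, x.2 i * x.2 i = 0 := by
    constructor <;> nlinarith [mul_self_nonneg x.1]
  have hx1 : x.1 = 0 := by nlinarith [h2.1]
  have hx2 : ∀ i, x.2 i = 0 := by
    intro i
    have := (Finset.sum_eq_zero_iff_of_nonneg hsq).1 h2.2 i (Finset.mem_univ i)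
    nlinarith [this]
  exact Prod.ext hx1 (funext hx2)

end PairAux

section DualSet

variable {n : ℕ} (b : Module.Basis (Fin (n + 1)) ℝ (ℝ × (Fin n → ℝ)))

/-- Dual description of the simplicial cone generated by `b 0, …, b i`. -/
def dualSet (i : ℕ) : Set (ℝ × (Fin n → ℝ)) :=
  {x | ∀ j : Fin (n + 1), ((j : ℕ) ≤ i → 0 ≤ b.coord j x) ∧ (i < (j : ℕ) → b.coord j x = 0)}

lemma coord_sum (lam : Fin (n+1) → ℝ) (j : Fin (n+1)) :
    b.coord j (∑ l, lam l • b l) = lam j := by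
  rw [map_sum]
  have : ∀ l ∈ Finset.univ (α := Fin (n+1)), b.coord j (lam l • b l)
      = if l = j then lam l else 0 := by
    intro l _
    rw [map_smul]
    by_cases h : l = j <;> simp [h, Module.Basis.coord_apply, Module.Basis.repr_self, Finsupp.single_apply]
  rw [Finset.sum_congr rfl this, Finset.sum_ite_eq' Finset.univ j lam]
  simp

lemma coneGenUpTo_eq_dualSet (i : ℕ) : coneGenUpTo (⇑b) i = dualSet b i := by
  ext x
  constructor
  · rintro ⟨lam, hnn, hz, rfl⟩
    intro j
    rw [coord_sum]
    exact ⟨fun _ => hnn j, fun h => hz j h⟩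
  · intro hx
    refine ⟨fun j => b.coord j x, fun j => ?_, fun j hj => (hx j).2 hj, ?_⟩
    · show 0 ≤ b.coord j x
      by_cases h : (j : ℕ) ≤ i
      · exact (hx j).1 h
      · rw [(hx j).2 (by omega)]
    · simp only [Module.Basis.coord_apply]
      exact (b.sum_repr x).symm

lemma dualSet_mono {i i' : ℕ} (h : i ≤ i') : dualSet b i ⊆ dualSet b i' := by
  intro x hx j
  constructor
  · intro _
    by_cases hji : (j : ℕ) ≤ i
    · exact (hx j).1 hji
    · rw [(hx j).2 (by omega)]
  · intro hj
    exact (hx j).2 (lt_of_le_of_lt h hj)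

lemma dualSet_isClosed (i : ℕ) : IsClosed (dualSet b i) := by
  have : dualSet b i = ⋂ j : Fin (n+1),
      {x | ((j : ℕ) ≤ i → 0 ≤ b.coord j x) ∧ (i < (j : ℕ) → b.coord j x = 0)} := by
    ext x; simp [dualSet, Set.mem_iInter]
  rw [this]
  apply isClosed_iInter
  intro j
  have hc : Continuous (b.coord j) := (b.coord j).continuous_of_finiteDimensional
  by_cases h : (j : ℕ) ≤ i
  · have : {x : ℝ × (Fin n → ℝ) | ((j : ℕ) ≤ i → 0 ≤ b.coord j x) ∧ (i < (j : ℕ) → b.coord j x = 0)}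
        = {x | 0 ≤ b.coord j x} := by
      ext x; simp only [Set.mem_setOf_eq]
      constructor
      · intro hx; exact hx.1 h
      · intro hx; exact ⟨fun _ => hx, fun h' => absurd h (by omega)⟩
    rw [this]
    exact isClosed_le continuous_const hc
  · have : {x : ℝ × (Fin n → ℝ) | ((j : ℕ) ≤ i → 0 ≤ b.coord j x) ∧ (i < (j : ℕ) → b.coord j x = 0)}
        = {x | b.coord j x = 0} := by
      ext x; simp only [Set.mem_setOf_eq]
      constructor
      · intro hx; exact hx.2 (by omega)
      · intro hx; exact ⟨fun h' => absurd h' h, fun _ => hx⟩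
    rw [this]
    exact isClosed_eq hc continuous_const
  
lemma dualSet_smul {i : ℕ} {x : ℝ × (Fin n → ℝ)} (hx : x ∈ dualSet b i) {c : ℝ} (hc : 0 ≤ c) :
    c • x ∈ dualSet b i := by
  intro j
  rw [map_smul]
  exact ⟨fun hj => smul_nonneg hc ((hx j).1 hj), fun hj => by rw [(hx j).2 hj, smul_zero]⟩

lemma dualSet_add {i : ℕ} {x y : ℝ × (Fin n → ℝ)} (hx : x ∈ dualSet b i) (hy : y ∈ dualSet b i) :
    x + y ∈ dualSet b i := by
  intro j
  rw [map_add]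
  exact ⟨fun hj => add_nonneg ((hx j).1 hj) ((hy j).1 hj),
    fun hj => by rw [(hx j).2 hj, (hy j).2 hj, add_zero]⟩

lemma basis_mem_dualSet {i : ℕ} {j : Fin (n+1)} (hj : (j : ℕ) ≤ i) : b j ∈ dualSet b i := by
  intro l
  simp only [Module.Basis.coord_apply, Module.Basis.repr_self, Finsupp.single_apply]
  constructor
  · intro _
    split_ifs <;> norm_num
  · intro hl
    have hne : ¬ (j = l) := fun hh => by omega
    rw [if_neg hne]

lemma dualSet_eq_zero_of_neg {i : ℕ} {x : ℝ × (Fin n → ℝ)} (hx : x ∈ dualSet b i)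
    (hnx : -x ∈ dualSet b i) : x = 0 := by
  have : ∀ j : Fin (n+1), b.coord j x = 0 := by
    intro j
    by_cases h : (j : ℕ) ≤ i
    · have h1 := (hx j).1 h
      have h2 := (hnx j).1 h
      rw [map_neg] at h2
      linarith
    · exact (hx j).2 (by omega)
  have : b.repr x = 0 := by
    ext j
    simpa [Module.Basis.coord_apply] using this j
  have := congrArg (b.repr.symm) this
  simpa using this

lemma dualSet_isSCP (i : ℕ) :
    (∃ r : ℕ, ∃ v : Fin r → (ℝ × (Fin n → ℝ)), dualSet b i = coneGen v)
    ∧ ∀ x ∈ dualSet b i, -x ∈ dualSet b i → x = 0 := by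
  constructor
  · refine ⟨n + 1, fun j => if (j : ℕ) ≤ i then b j else 0, ?_⟩
    rw [← coneGenUpTo_eq_dualSet]
    ext x
    constructor
    · rintro ⟨lam, hnn, hz, rfl⟩
      refine ⟨lam, hnn, Finset.sum_congr rfl fun j _ => ?_⟩
      show lam j • b j = lam j • (if (j : ℕ) ≤ i then b j else 0)
      by_cases h : (j : ℕ) ≤ i
      · rw [if_pos h]
      · rw [if_neg h, hz j (by omega), zero_smul, zero_smul]
    · rintro ⟨lam, hnn, rfl⟩
      refine ⟨fun j => if (j : ℕ) ≤ i then lam j else 0, fun j => ?_, fun j hj => ?_, ?_⟩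
      · show 0 ≤ if (j : ℕ) ≤ i then lam j else 0
        by_cases h : (j : ℕ) ≤ i <;> simp [h, hnn j]
      · show (if (j : ℕ) ≤ i then lam j else 0) = 0
        rw [if_neg (by omega)]
      · refine Finset.sum_congr rfl fun j _ => ?_
        show lam j • (if (j : ℕ) ≤ i then b j else 0) = (if (j : ℕ) ≤ i then lam j else 0) • b j
        by_cases h : (j : ℕ) ≤ i <;> simp [h]
  · exact fun x hx hnx => dualSet_eq_zero_of_neg b hx hnx

lemma dualSet_fst_nonneg (hb : ∀ j, 0 ≤ (b j).1) {i : ℕ} {x : ℝ × (Fin n → ℝ)}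
    (hx : x ∈ dualSet b i) : 0 ≤ x.1 := by
  rw [← coneGenUpTo_eq_dualSet] at hx
  obtain ⟨lam, hnn, hz, rfl⟩ := hx
  have : (∑ j, lam j • b j).1 = ∑ j, lam j * (b j).1 := by
    rw [Prod.fst_sum]
    rfl
  rw [this]
  exact Finset.sum_nonneg fun j _ => mul_nonneg (hnn j) (hb j)

lemma span_dualSet (i : ℕ) (hi : i + 1 ≤ n + 1) :
    Submodule.span ℝ (dualSet b i)
      = Submodule.span ℝ (Set.range (⇑b ∘ Fin.castLE hi)) := by
  apply le_antisymm
  · rw [Submodule.span_le]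
    intro x hx
    rw [← coneGenUpTo_eq_dualSet] at hx
    obtain ⟨lam, hnn, hz, rfl⟩ := hx
    apply Submodule.sum_mem
    intro j _
    by_cases h : (j : ℕ) ≤ i
    · apply Submodule.smul_mem
      apply Submodule.subset_span
      refine ⟨⟨(j : ℕ), by omega⟩, ?_⟩
      simp [Function.comp, Fin.castLE]
    · rw [hz j (by omega), zero_smul]; exact Submodule.zero_mem _
  · rw [Submodule.span_le]
    rintro x ⟨l, rfl⟩
    apply Submodule.subset_span
    exact basis_mem_dualSet b (by simpa using l.is_le)

lemma spanDim_dualSet (i : ℕ) (hi : i + 1 ≤ n + 1) :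
    Module.finrank ℝ (Submodule.span ℝ (dualSet b i)) = i + 1 := by
  rw [span_dualSet b i hi]
  rw [finrank_span_eq_card (b.linearIndependent.comp _ (Fin.castLE_injective hi))]
  simp


lemma coord_zero_iff {x : ℝ × (Fin n → ℝ)} (h : ∀ j, b.coord j x = 0) : x = 0 := by
  have hr : b.repr x = 0 := by
    ext j
    simpa [Module.Basis.coord_apply] using h j
  have := congrArg (b.repr.symm) hr
  simpa using this

/-- The polyhedron whose closed cone is `dualSet b i`. -/
def sliceSet (i : ℕ) : Set (Fin n → ℝ) := {x | ((1 : ℝ), x) ∈ dualSet b i}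

lemma slice_mem_iff (i : ℕ) (x : Fin n → ℝ) :
    x ∈ sliceSet b i ↔ ((1 : ℝ), x) ∈ dualSet b i := Iff.rfl

lemma sliceSet_mono {i i' : ℕ} (h : dualSet b i ⊆ dualSet b i') :
    sliceSet b i ⊆ sliceSet b i' := fun _ hx => h hx

lemma base_point_mem (hb0 : 0 < (b 0).1) (i : ℕ) : ((1 : ℝ), ((b 0).1)⁻¹ • (b 0).2) ∈ dualSet b i := by
  have h1 : (((b 0).1)⁻¹ • (b 0) : ℝ × (Fin n → ℝ)) ∈ dualSet b i :=
    dualSet_smul b (basis_mem_dualSet b (by simp)) (inv_nonneg.2 hb0.le)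
  have h2 : (((b 0).1)⁻¹ • (b 0) : ℝ × (Fin n → ℝ)) = ((1 : ℝ), ((b 0).1)⁻¹ • (b 0).2) := by
    ext
    · simp [inv_mul_cancel₀ (ne_of_gt hb0)]
    · simp
  rwa [h2] at h1

lemma sliceSet_nonempty (hb0 : 0 < (b 0).1) (i : ℕ) : (sliceSet b i).Nonempty :=
  ⟨((b 0).1)⁻¹ • (b 0).2, base_point_mem b hb0 i⟩

lemma closedConeOver_sliceSet (hb0 : 0 < (b 0).1) (hbnn : ∀ j, 0 ≤ (b j).1) (i : ℕ) : closedConeOver (sliceSet b i) = dualSet b i := by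
  apply le_antisymm
  · apply closure_minimal _ (dualSet_isClosed b i)
    rintro w ⟨l, x, hx, hl, rfl⟩
    have : ((l : ℝ), l • x) = l • ((1 : ℝ), x) := by ext <;> simp
    rw [this]
    exact dualSet_smul b hx hl.le
  · intro x hx
    have hx1 : 0 ≤ x.1 := dualSet_fst_nonneg b hbnn hx
    have hnb : (nhdsWithin (0:ℝ) (Set.Ioi 0)).NeBot := nhdsGT_neBot 0
    refine mem_closure_of_tendsto (f := fun ε : ℝ => x + ε • b 0)
      (b := nhdsWithin (0:ℝ) (Set.Ioi 0)) ?_ ?_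
    · have hcont : Continuous (fun ε : ℝ => x + ε • b 0) :=
        continuous_const.add (continuous_id.smul continuous_const)
      have := hcont.tendsto 0
      simp only [zero_smul, add_zero] at this
      exact this.mono_left nhdsWithin_le_nhds
    · filter_upwards [self_mem_nhdsWithin] with ε (hε : 0 < ε)
      have hz : x + ε • b 0 ∈ dualSet b i :=
        dualSet_add b hx (dualSet_smul b (basis_mem_dualSet b (by simp)) hε.le)
      set z := x + ε • b 0 with hzdef
      have hz1 : 0 < z.1 := by
        have : z.1 = x.1 + ε * (b 0).1 := rfl
        rw [this]
        nlinarith [hb0, hε]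
      have hy : (z.1)⁻¹ • z ∈ dualSet b i := dualSet_smul b hz (inv_nonneg.2 hz1.le)
      have hy' : ((z.1)⁻¹ • z : ℝ × (Fin n → ℝ)) = ((1 : ℝ), (z.1)⁻¹ • z.2) := by
        ext
        · simp [inv_mul_cancel₀ (ne_of_gt hz1)]
        · simp
      refine ⟨z.1, (z.1)⁻¹ • z.2, ?_, hz1, ?_⟩
      · rw [slice_mem_iff, ← hy']; exact hy
      · ext
        · simp
        · simp only [Prod.smul_snd, Pi.smul_apply, smul_eq_mul]
          field_simp

lemma coord_one_add (x : Fin n → ℝ) (j : Fin (n+1)) :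
    b.coord j ((1 : ℝ), x) = b.coord j ((1:ℝ), 0) + ∑ t, x t * b.coord j ((0:ℝ), Pi.single t 1) := by
  have hdecomp : ((1 : ℝ), x) = ((1:ℝ), (0 : Fin n → ℝ)) + ∑ t, x t • (((0:ℝ), Pi.single t (1:ℝ)) : ℝ × (Fin n → ℝ)) := by
    ext
    · simp [Prod.fst_sum]
    · rename_i s
      simp only [Prod.snd_add, Prod.snd_sum, Prod.smul_snd, Pi.add_apply, Pi.zero_apply]
      rw [Finset.sum_apply]
      simp only [Pi.smul_apply, Pi.single_apply, smul_eq_mul]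
      rw [Finset.sum_congr rfl (fun t _ => by rw [mul_ite, mul_one, mul_zero]),
        Finset.sum_ite_eq Finset.univ s x]
      simp
  rw [hdecomp, map_add, map_sum]
  congr 1
  exact Finset.sum_congr rfl fun t _ => by rw [map_smul]; simp [mul_comm]

lemma sliceSet_isPolyhedron (i : ℕ) : IsPolyhedron (sliceSet b i) := by
  refine ⟨(n+1) + (n+1),
    Fin.addCases (fun j t => - b.coord j ((0:ℝ), Pi.single t 1))
      (fun j t => if i < (j : ℕ) then b.coord j ((0:ℝ), Pi.single t 1) else 0),
    Fin.addCases (fun j => b.coord j ((1:ℝ), 0))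
      (fun j => if i < (j : ℕ) then - b.coord j ((1:ℝ), 0) else 0), ?_⟩
  ext x
  simp only [slice_mem_iff, Set.mem_setOf_eq]
  constructor
  · intro hx l
    refine Fin.addCases ?_ ?_ l
    · intro j
      simp only [Fin.addCases_left]
      have h0 : 0 ≤ b.coord j ((1:ℝ), x) := by
        by_cases h : (j : ℕ) ≤ i
        · exact (hx j).1 h
        · rw [(hx j).2 (by omega)]
      rw [coord_one_add] at h0
      have : ∑ t, -b.coord j ((0:ℝ), Pi.single t 1) * x t
          = - ∑ t, x t * b.coord j ((0:ℝ), Pi.single t 1) := by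
        rw [← Finset.sum_neg_distrib]
        exact Finset.sum_congr rfl fun t _ => by ring
      rw [this]
      linarith
    · intro j
      simp only [Fin.addCases_right]
      by_cases h : i < (j : ℕ)
      · simp only [if_pos h]
        have h0 : b.coord j ((1:ℝ), x) = 0 := (hx j).2 h
        rw [coord_one_add] at h0
        have : ∑ t, b.coord j ((0:ℝ), Pi.single t 1) * x t
            = ∑ t, x t * b.coord j ((0:ℝ), Pi.single t 1) :=
          Finset.sum_congr rfl fun t _ => by ring
        rw [this]
        linarith
      · simp only [if_neg h]
        simp
  · intro hx j
    have h1 := hx (Fin.castAdd (n+1) j)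
    simp only [Fin.addCases_left] at h1
    have h2 := hx (Fin.natAdd (n+1) j)
    simp only [Fin.addCases_right] at h2
    have h1' : 0 ≤ b.coord j ((1:ℝ), x) := by
      rw [coord_one_add]
      have : ∑ t, -b.coord j ((0:ℝ), Pi.single t 1) * x t
          = - ∑ t, x t * b.coord j ((0:ℝ), Pi.single t 1) := by
        rw [← Finset.sum_neg_distrib]
        exact Finset.sum_congr rfl fun t _ => by ring
      rw [this] at h1
      linarith
    refine ⟨fun _ => h1', fun hij => ?_⟩
    simp only [if_pos hij] at h2
    have hcomm : ∑ t, b.coord j ((0:ℝ), Pi.single t 1) * x t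
        = ∑ t, x t * b.coord j ((0:ℝ), Pi.single t 1) :=
      Finset.sum_congr rfl fun t _ => by ring
    rw [hcomm] at h2
    have hle : b.coord j ((1:ℝ), x) ≤ 0 := by
      rw [coord_one_add]
      linarith
    linarith

lemma affine_nonneg_aux {c e : ℝ} (h : ∀ t : ℝ, 0 ≤ c + t * e) : e = 0 := by
  by_contra he
  have := h (-(c+1)/e)
  rw [div_mul_cancel₀ _ he] at this
  linarith

lemma sliceSet_hasNoLine (i : ℕ) : HasNoLine (sliceSet b i) := by
  rintro ⟨x, d, hd, hline⟩
  apply hd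
  have key : ∀ j : Fin (n+1), b.coord j ((0:ℝ), d) = 0 := by
    intro j
    have hcoord : ∀ t : ℝ, b.coord j ((1:ℝ), x + t • d)
        = b.coord j ((1:ℝ), x) + t * b.coord j ((0:ℝ), d) := by
      intro t
      have : ((1:ℝ), x + t • d) = ((1:ℝ), x) + t • ((0:ℝ), d) := by ext <;> simp
      rw [this, map_add, map_smul]
      simp
    by_cases h : (j : ℕ) ≤ i
    · apply affine_nonneg_aux (c := b.coord j ((1:ℝ), x))
      intro t
      rw [← hcoord t]
      exact ((hline t) j).1 h
    · have h0 := (hline 0 j).2 (by omega)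
      have h1 := (hline 1 j).2 (by omega)
      rw [hcoord 0] at h0
      rw [hcoord 1] at h1
      linarith
  have h0 : (((0:ℝ), d) : ℝ × (Fin n → ℝ)) = 0 := coord_zero_iff b key
  simpa using congrArg Prod.snd h0


lemma exists_interior_point {i : ℕ} (hb0 : 0 < (b 0).1) (hbnn : ∀ j, 0 ≤ (b j).1) :
    ∃ p : ℝ × (Fin n → ℝ), ∃ κ : ℝ, 0 < κ ∧ p.1 = 1 ∧
      (∀ l : Fin (n+1), b.coord l p = if (l : ℕ) ≤ i then κ else 0) := by
  classical
  have hzcoord : ∀ l : Fin (n+1),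
      b.coord l (∑ j : Fin (n+1), (if (j : ℕ) ≤ i then (1:ℝ) else 0) • b j)
      = if (l : ℕ) ≤ i then 1 else 0 :=
    fun l => coord_sum b (fun j => if (j : ℕ) ≤ i then (1:ℝ) else 0) l
  obtain ⟨z, hzcoord⟩ : ∃ z : ℝ × (Fin n → ℝ),
      ∀ l : Fin (n+1), b.coord l z = if (l : ℕ) ≤ i then 1 else 0 := ⟨_, hzcoord⟩
  have hz1 : 0 < z.1 := by
    have hzeq : z = ∑ j : Fin (n+1), (if (j : ℕ) ≤ i then (1:ℝ) else 0) • b j := by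
      apply b.repr.injective
      ext l
      have h1 := hzcoord l
      have h2 := coord_sum b (fun j => if (j : ℕ) ≤ i then (1:ℝ) else 0) l
      simp only [Module.Basis.coord_apply] at h1 h2
      rw [h1, h2]
    have hz1' : z.1 = ∑ j : Fin (n+1), (if (j : ℕ) ≤ i then (1:ℝ) else 0) * (b j).1 := by
      rw [hzeq, Prod.fst_sum]; rfl
    have hterm : ∀ j ∈ Finset.univ (α := Fin (n+1)),
        0 ≤ (if (j : ℕ) ≤ i then (1:ℝ) else 0) * (b j).1 := by
      intro j _
      by_cases h : (j : ℕ) ≤ i <;> simp [h, hbnn j]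
    have h0 : (if ((0 : Fin (n+1)) : ℕ) ≤ i then (1:ℝ) else 0) * (b 0).1
        ≤ ∑ j : Fin (n+1), (if (j : ℕ) ≤ i then (1:ℝ) else 0) * (b j).1 :=
      Finset.single_le_sum hterm (Finset.mem_univ 0)
    simp only [Fin.val_zero, Nat.zero_le, if_pos, one_mul] at h0
    rw [hz1']
    linarith
  refine ⟨(z.1)⁻¹ • z, (z.1)⁻¹, inv_pos.2 hz1, ?_, ?_⟩
  · show (z.1)⁻¹ * z.1 = 1
    field_simp
  · intro l
    rw [map_smul, hzcoord l, smul_eq_mul]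
    by_cases h : (l : ℕ) ≤ i <;> simp [h]

lemma coord_pattern_mem {i : ℕ} {x : ℝ × (Fin n → ℝ)}
    (h : ∀ l : Fin (n+1), ((l : ℕ) ≤ i → 0 ≤ b.coord l x) ∧ (i < (l : ℕ) → b.coord l x = 0)) :
    x ∈ dualSet b i := h

lemma sliceSet_polyDim (hb0 : 0 < (b 0).1) (hbnn : ∀ j, 0 ≤ (b j).1) (i : ℕ)
    (hi : i + 1 ≤ n + 1) : polyDim (sliceSet b i) = i := by
  classical
  set Vi : Submodule ℝ (ℝ × (Fin n → ℝ)) :=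
    Submodule.span ℝ (Set.range (⇑b ∘ Fin.castLE hi)) with hVi
  have hdual_sub : dualSet b i ⊆ (Vi : Set (ℝ × (Fin n → ℝ))) := by
    intro x hx
    have := Submodule.subset_span (R := ℝ) (s := dualSet b i) hx
    rwa [span_dualSet b i hi] at this
  obtain ⟨p, κ, hκpos, hp1, hpcoord⟩ := exists_interior_point b (i := i) hb0 hbnn
  have hpdual : p ∈ dualSet b i := by
    intro l
    rw [hpcoord l]
    constructor
    · intro h; rw [if_pos h]; exact hκpos.le
    · intro h; rw [if_neg (by omega)]
  have hpeq : p = ((1:ℝ), p.2) := by rw [← hp1]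
  have hpslice : p.2 ∈ sliceSet b i := by
    show ((1:ℝ), p.2) ∈ dualSet b i
    rwa [← hpeq]
  -- vectorSpan = Wi
  have hvs : vectorSpan ℝ (sliceSet b i)
      = Submodule.comap (LinearMap.inr ℝ ℝ (Fin n → ℝ)) Vi := by
    apply le_antisymm
    · rw [vectorSpan_def, Submodule.span_le]
      rintro v hv
      obtain ⟨x, hx, y, hy, rfl⟩ := hv
      show LinearMap.inr ℝ ℝ (Fin n → ℝ) (x - y) ∈ Vi
      have hxy : LinearMap.inr ℝ ℝ (Fin n → ℝ) (x - y) = ((1:ℝ), x) - ((1:ℝ), y) := by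
        ext <;> simp
      rw [hxy]
      exact Submodule.sub_mem _ (hdual_sub hx) (hdual_sub hy)
    · intro d hd
      have hdVi : ((0:ℝ), d) ∈ Vi := hd
      have hczero : ∀ l : Fin (n+1), i < (l : ℕ) → b.coord l ((0:ℝ), d) = 0 := by
        intro l hl
        have hker : Vi ≤ LinearMap.ker (b.coord l) := by
          rw [hVi, Submodule.span_le]
          rintro v ⟨m, rfl⟩
          simp only [SetLike.mem_coe, LinearMap.mem_ker, Function.comp_apply,
            Module.Basis.coord_apply, Module.Basis.repr_self]
          refine Finsupp.single_eq_of_ne ?_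
          intro hh
          have : ((Fin.castLE hi m : Fin (n+1)) : ℕ) = (m : ℕ) := rfl
          omega
        exact hker hdVi
      obtain ⟨ε, hεpos, hεbound⟩ : ∃ ε : ℝ, 0 < ε ∧
          ∀ l : Fin (n+1), ε * |b.coord l ((0:ℝ), d)| ≤ κ := by
        set S : ℝ := ∑ l : Fin (n+1), |b.coord l ((0:ℝ), d)| with hS
        have hSnn : 0 ≤ S := Finset.sum_nonneg fun l _ => abs_nonneg _
        refine ⟨κ / (1 + S), div_pos hκpos (by linarith), fun l => ?_⟩
        have habs : |b.coord l ((0:ℝ), d)| ≤ S := by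
          rw [hS]
          exact Finset.single_le_sum (f := fun m => |b.coord m ((0:ℝ), d)|)
            (fun m _ => abs_nonneg _) (Finset.mem_univ l)
        rw [div_mul_eq_mul_div, div_le_iff₀ (by linarith : (0:ℝ) < 1 + S)]
        nlinarith
      have hmem2 : p + ε • ((0:ℝ), d) ∈ dualSet b i := by
        intro l
        have hval : b.coord l (p + ε • ((0:ℝ), d))
            = (if (l : ℕ) ≤ i then κ else 0) + ε * b.coord l ((0:ℝ), d) := by
          rw [map_add, hpcoord l, map_smul, smul_eq_mul]
        rw [hval]
        constructor
        · intro h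
          rw [if_pos h]
          have h1 := hεbound l
          have h2 := neg_abs_le (b.coord l ((0:ℝ), d))
          nlinarith
        · intro h
          rw [if_neg (by omega), hczero l h, mul_zero, zero_add]
      have hmemslice : p.2 + ε • d ∈ sliceSet b i := by
        show ((1:ℝ), p.2 + ε • d) ∈ dualSet b i
        have : ((1:ℝ), p.2 + ε • d) = p + ε • ((0:ℝ), d) := by
          rw [hpeq]; ext <;> simp
        rwa [this]
      have hdiff : (p.2 + ε • d) - p.2 ∈ vectorSpan ℝ (sliceSet b i) := by
        have := vsub_mem_vectorSpan ℝ hmemslice hpslice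
        simpa using this
      have hεd : ε • d ∈ vectorSpan ℝ (sliceSet b i) := by
        simpa using hdiff
      have := Submodule.smul_mem (vectorSpan ℝ (sliceSet b i)) ε⁻¹ hεd
      rwa [smul_smul, inv_mul_cancel₀ (ne_of_gt hεpos), one_smul] at this
  -- dimension count
  have hinj : Function.Injective (LinearMap.inr ℝ ℝ (Fin n → ℝ)) := LinearMap.inr_injective
  have e1 : Module.finrank ℝ (Submodule.comap (LinearMap.inr ℝ ℝ (Fin n → ℝ)) Vi)
      = Module.finrank ℝ
        (Submodule.map (LinearMap.inr ℝ ℝ (Fin n → ℝ))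
          (Submodule.comap (LinearMap.inr ℝ ℝ (Fin n → ℝ)) Vi)) :=
    (Submodule.equivMapOfInjective _ hinj _).finrank_eq
  have e2 : Submodule.map (LinearMap.inr ℝ ℝ (Fin n → ℝ))
      (Submodule.comap (LinearMap.inr ℝ ℝ (Fin n → ℝ)) Vi)
      = LinearMap.range (LinearMap.inr ℝ ℝ (Fin n → ℝ)) ⊓ Vi := Submodule.map_comap_eq _ Vi
  have e3 : LinearMap.range (LinearMap.inr ℝ ℝ (Fin n → ℝ))
      = LinearMap.ker (LinearMap.fst ℝ ℝ (Fin n → ℝ)) :=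
    (LinearMap.ker_fst ℝ ℝ (Fin n → ℝ)).symm
  have e4 : Submodule.map Vi.subtype
      (LinearMap.ker ((LinearMap.fst ℝ ℝ (Fin n → ℝ)).domRestrict Vi))
      = Vi ⊓ LinearMap.ker (LinearMap.fst ℝ ℝ (Fin n → ℝ)) := by
    rw [LinearMap.ker_domRestrict, Submodule.map_comap_subtype]
  have e5 : Module.finrank ℝ
        (LinearMap.ker ((LinearMap.fst ℝ ℝ (Fin n → ℝ)).domRestrict Vi))
      = Module.finrank ℝ
        (Vi ⊓ LinearMap.ker (LinearMap.fst ℝ ℝ (Fin n → ℝ)) : Submodule ℝ (ℝ × (Fin n → ℝ))) := by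
    rw [← e4]
    exact (Submodule.equivMapOfInjective _ (Submodule.injective_subtype Vi) _).finrank_eq
  have hVifr : Module.finrank ℝ Vi = i + 1 := by
    rw [hVi, finrank_span_eq_card (b.linearIndependent.comp _ (Fin.castLE_injective hi))]
    simp
  have hrange : LinearMap.range ((LinearMap.fst ℝ ℝ (Fin n → ℝ)).domRestrict Vi) = ⊤ := by
    have hb0Vi : b 0 ∈ Vi := by
      apply Submodule.subset_span
      exact ⟨⟨0, by omega⟩, rfl⟩
    rw [Submodule.eq_top_iff']
    intro y
    have hmem : (b 0).1 ∈ LinearMap.range ((LinearMap.fst ℝ ℝ (Fin n → ℝ)).domRestrict Vi) :=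
      ⟨⟨b 0, hb0Vi⟩, rfl⟩
    have := Submodule.smul_mem
      (LinearMap.range ((LinearMap.fst ℝ ℝ (Fin n → ℝ)).domRestrict Vi)) (y / (b 0).1) hmem
    rwa [smul_eq_mul, div_mul_cancel₀ y (ne_of_gt hb0)] at this
  have hrank := LinearMap.finrank_range_add_finrank_ker
    ((LinearMap.fst ℝ ℝ (Fin n → ℝ)).domRestrict Vi)
  have hrange1 : Module.finrank ℝ
      (LinearMap.range ((LinearMap.fst ℝ ℝ (Fin n → ℝ)).domRestrict Vi)) = 1 := by
    rw [hrange]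
    simpa using Module.finrank_self ℝ
  rw [hrange1, hVifr] at hrank
  have hker : Module.finrank ℝ
      (LinearMap.ker ((LinearMap.fst ℝ ℝ (Fin n → ℝ)).domRestrict Vi)) = i := by omega
  rw [polyDim, direction_affineSpan, hvs, e1, e2, e3, inf_comm, ← e5, hker]

end DualSet

section Extend

variable {n : ℕ}

lemma finrank_V : Module.finrank ℝ (ℝ × (Fin n → ℝ)) = n + 1 := by
  simp [Module.finrank_prod, Module.finrank_fin_fun, Nat.add_comm]

lemma exists_snoc_extension {m : ℕ} (hm : m < n) (g : Fin (m + 1) → ℝ × (Fin n → ℝ))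
    (hli : LinearIndependent ℝ g) (hg0 : 0 < (g 0).1) :
    ∃ y : ℝ × (Fin n → ℝ), y.1 = 0 ∧ LinearIndependent ℝ (Fin.snoc g y) := by
  have hne : ∃ y : ℝ × (Fin n → ℝ), y.1 = 0 ∧ y ∉ Submodule.span ℝ (Set.range g) := by
    by_contra hcon
    push_neg at hcon
    have htop : Submodule.span ℝ (Set.range g) = ⊤ := by
      rw [Submodule.eq_top_iff']
      intro x
      have h1 : (x - (x.1 / (g 0).1) • g 0).1 = 0 := by
        simp only [Prod.fst_sub, Prod.smul_fst, smul_eq_mul]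
        field_simp
        ring
      have h2 := hcon _ h1
      have h3 : (x.1 / (g 0).1) • g 0 ∈ Submodule.span ℝ (Set.range g) :=
        Submodule.smul_mem _ _ (Submodule.subset_span ⟨0, rfl⟩)
      have := Submodule.add_mem _ h2 h3
      simpa using this
    have hfr : Module.finrank ℝ (Submodule.span ℝ (Set.range g)) = m + 1 :=
      (finrank_span_eq_card hli).trans (by simp)
    rw [htop] at hfr
    rw [finrank_top, finrank_V] at hfr
    omega
  obtain ⟨y, hy0, hyspan⟩ := hne
  exact ⟨y, hy0, linearIndependent_fin_snoc.2 ⟨hli, hyspan⟩⟩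

lemma exists_extension_aux (k : ℕ) (v : Fin (k + 1) → ℝ × (Fin n → ℝ))
    (hli : LinearIndependent ℝ v) (hv0 : 0 < (v 0).1) :
    ∀ m (_hkm : k ≤ m) (_hmn : m ≤ n), ∃ g : Fin (m + 1) → ℝ × (Fin n → ℝ),
      LinearIndependent ℝ g ∧ (∀ j : Fin (k + 1), g (Fin.castLE (by omega) j) = v j) ∧
      (∀ j : Fin (m + 1), k < (j : ℕ) → (g j).1 = 0) := by
  intro m
  induction m with
  | zero =>
    intro hk _
    interval_cases k
    exact ⟨v, hli, fun j => congrArg v (Fin.ext rfl), fun j hj => by omega⟩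
  | succ m ih =>
    intro hk hmn
    rcases Nat.lt_or_ge m k with hmk | hmk
    · -- k = m + 1
      have : k = m + 1 := by omega
      subst this
      exact ⟨v, hli, fun j => congrArg v (Fin.ext rfl), fun j hj => by omega⟩
    · obtain ⟨g, hgli, hgv, hg0⟩ := ih hmk (by omega)
      have hgfst : 0 < (g 0).1 := by
        have : g (Fin.castLE (by omega) (0 : Fin (k+1))) = v 0 := hgv 0
        have h0 : (Fin.castLE (by omega : k + 1 ≤ m + 1) (0 : Fin (k+1))) = (0 : Fin (m+1)) :=
          Fin.ext rfl
        rw [h0] at this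
        rw [this]
        exact hv0
      obtain ⟨y, hy0, hsnoc⟩ := exists_snoc_extension (by omega) g hgli hgfst
      refine ⟨Fin.snoc g y, hsnoc, ?_, ?_⟩
      · intro j
        have hcast : (Fin.castLE (by omega : k + 1 ≤ m + 2) j)
            = Fin.castSucc (Fin.castLE (by omega : k + 1 ≤ m + 1) j) := Fin.ext rfl
        rw [hcast, Fin.snoc_castSucc]
        exact hgv j
      · intro j hj
        rcases Nat.lt_or_ge (j : ℕ) (m + 1) with hlt | hge
        · have : j = Fin.castSucc ⟨(j : ℕ), hlt⟩ := Fin.ext rfl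
          rw [this, Fin.snoc_castSucc]
          exact hg0 _ hj
        · have hjlt := j.isLt
          have : j = Fin.last (m + 1) := by
            apply Fin.ext
            rw [Fin.val_last]
            omega
          rw [this, Fin.snoc_last]
          exact hy0

lemma exists_basis_extension (k : ℕ) (hkn : k ≤ n) (v : Fin (k + 1) → ℝ × (Fin n → ℝ))
    (hli : LinearIndependent ℝ v) (hv0 : 0 < (v 0).1) :
    ∃ b : Module.Basis (Fin (n + 1)) ℝ (ℝ × (Fin n → ℝ)),
      (∀ j : Fin (k + 1), b (Fin.castLE (by omega) j) = v j) ∧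
      (∀ j : Fin (n + 1), k < (j : ℕ) → (b j).1 = 0) := by
  obtain ⟨g, hgli, hgv, hg0⟩ := exists_extension_aux k v hli hv0 n hkn le_rfl
  have hcard : Fintype.card (Fin (n + 1)) = Module.finrank ℝ (ℝ × (Fin n → ℝ)) := by
    rw [finrank_V]; simp
  refine ⟨basisOfLinearIndependentOfCardEqFinrank hgli hcard, ?_, ?_⟩
  · intro j
    rw [coe_basisOfLinearIndependentOfCardEqFinrank]
    exact hgv j
  · intro j hj
    rw [coe_basisOfLinearIndependentOfCardEqFinrank]
    exact hg0 j hj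

end Extend

section Transfer

variable {n : ℕ}

lemma sum_truncate {V : Type*} [AddCommMonoid V] {N M : ℕ} (h : M ≤ N) (f : Fin N → V)
    (hf : ∀ j : Fin N, M ≤ (j : ℕ) → f j = 0) :
    ∑ j, f j = ∑ j : Fin M, f (Fin.castLE h j) := by
  classical
  have h1 : ∑ j : Fin M, f (Fin.castLE h j)
      = ∑ j ∈ Finset.univ.map (Fin.castLEEmb h), f j := by
    rw [Finset.sum_map]
    rfl
  rw [h1]
  apply (Finset.sum_subset (Finset.subset_univ _) _).symm
  intro x _ hx
  apply hf
  by_contra hlt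
  push_neg at hlt
  exact hx (Finset.mem_map.2 ⟨⟨(x : ℕ), hlt⟩, Finset.mem_univ _, Fin.ext rfl⟩)

lemma self_mem_coneGenUpTo {V : Type*} [AddCommMonoid V] [Module ℝ V] {r : ℕ}
    (v : Fin r → V) {j : Fin r} {i : ℕ} (hj : (j : ℕ) ≤ i) : v j ∈ coneGenUpTo v i := by
  classical
  refine ⟨fun l => if l = j then 1 else 0, fun l => ?_, fun l hl => ?_, ?_⟩
  · show (0:ℝ) ≤ if l = j then 1 else 0
    split_ifs <;> norm_num
  · show (if l = j then (1:ℝ) else 0) = 0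
    rw [if_neg]; intro hh; subst hh; omega
  · rw [Finset.sum_congr rfl (fun l _ => ?_), Finset.sum_ite_eq' Finset.univ j (fun l => v l)]
    · simp
    · by_cases hh : l = j <;> simp [hh]

/-- Transfer of truncated cones along the extension `b` of `v`. -/
lemma coneGenUpTo_transfer {k : ℕ} (hkn : k ≤ n) (v : Fin (k + 1) → ℝ × (Fin n → ℝ))
    (b : Module.Basis (Fin (n + 1)) ℝ (ℝ × (Fin n → ℝ)))
    (hbv : ∀ j : Fin (k + 1), b (Fin.castLE (by omega) j) = v j)
    {i : ℕ} (hik : i ≤ k) : coneGenUpTo (⇑b) i = coneGenUpTo v i := by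
  classical
  have hcast : (k : ℕ) + 1 ≤ n + 1 := by omega
  ext x
  constructor
  · rintro ⟨lam, hnn, hz, rfl⟩
    refine ⟨fun j => lam (Fin.castLE hcast j), fun j => hnn _, fun j hj => hz _ hj, ?_⟩
    rw [sum_truncate hcast (fun j => lam j • b j)
      (fun j hj => by show lam j • b j = 0; rw [hz j (by omega), zero_smul])]
    exact Finset.sum_congr rfl fun j _ => by rw [hbv j]
  · rintro ⟨lam, hnn, hz, rfl⟩
    refine ⟨fun j => if h : (j : ℕ) ≤ k then lam ⟨(j : ℕ), by omega⟩ else 0, fun j => ?_,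
      fun j hj => ?_, ?_⟩
    · show (0:ℝ) ≤ if h : (j : ℕ) ≤ k then lam ⟨(j : ℕ), by omega⟩ else 0
      by_cases h : (j : ℕ) ≤ k
      · rw [dif_pos h]; exact hnn _
      · rw [dif_neg h]
    · show (if h : (j : ℕ) ≤ k then lam ⟨(j : ℕ), by omega⟩ else 0) = 0
      by_cases h : (j : ℕ) ≤ k
      · rw [dif_pos h]; exact hz _ hj
      · rw [dif_neg h]
    · rw [sum_truncate hcast
        (fun j => (if h : (j : ℕ) ≤ k then lam ⟨(j : ℕ), by omega⟩ else 0) • b j)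
        (fun j hj => by
          show (if h : (j : ℕ) ≤ k then lam ⟨(j : ℕ), by omega⟩ else 0) • b j = 0
          rw [dif_neg (by omega), zero_smul])]
      refine Finset.sum_congr rfl fun j _ => ?_
      have h1 : ((Fin.castLE hcast j : Fin (n+1)) : ℕ) ≤ k := by
        have := j.isLt
        show (j : ℕ) ≤ k
        omega
      show lam j • v j = (if h : ((Fin.castLE hcast j : Fin (n+1)) : ℕ) ≤ k
          then lam ⟨((Fin.castLE hcast j : Fin (n+1)) : ℕ), by omega⟩ else 0)
          • b (Fin.castLE hcast j)
      rw [dif_pos h1, hbv j]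
      congr 1

end Transfer

section RelAux

/-- Under antisymmetry, the order does not change when extending the flag. -/
lemma flagRel_iff_of_agree {n k : ℕ} (hkn : k ≤ n) (Γ : AddSubgroup ℝ)
    (w w' : ℕ → ℝ × (Fin n → ℝ)) (hww' : ∀ i, i ≤ k → w' i = w i)
    (hanti : ∀ a b : Γ × (Fin n → ℤ), flagRel n k Γ w a b → flagRel n k Γ w b a → a = b)
    (a b : Γ × (Fin n → ℤ)) : flagRel n k Γ w a b ↔ flagRel n n Γ w' a b := by
  classical
  by_cases hall : ∀ j, j ≤ k → pairE (w j) (embGZ Γ a) = pairE (w j) (embGZ Γ b)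
  · have h1 : flagRel n k Γ w a b :=
      le_of_eq (congrArg toLex (funext fun i => hall (i : ℕ) i.is_le))
    have h2 : flagRel n k Γ w b a :=
      le_of_eq (congrArg toLex (funext fun i => (hall (i : ℕ) i.is_le).symm))
    have hab : a = b := hanti a b h1 h2
    subst hab
    exact iff_of_true (le_refl _) (le_refl _)
  · push_neg at hall
    obtain ⟨j₀, hj₀k, hj₀ne⟩ := hall
    have hex : ∃ j, j ≤ k ∧ pairE (w j) (embGZ Γ a) ≠ pairE (w j) (embGZ Γ b) := ⟨j₀, hj₀k, hj₀ne⟩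
    set i₀ := Nat.find hex with hi₀def
    obtain ⟨hi₀k, hi₀ne⟩ := Nat.find_spec hex
    have hmin : ∀ m, m < i₀ → pairE (w m) (embGZ Γ a) = pairE (w m) (embGZ Γ b) := by
      intro m hm
      have := Nat.find_min hex hm
      push_neg at this
      exact this (by omega)
    have hL : flagRel n k Γ w a b ↔
        pairE (w i₀) (embGZ Γ a) < pairE (w i₀) (embGZ Γ b) := by
      have := lex_le_char (m := k) (fun i : Fin (k+1) => pairE (w (i : ℕ)) (embGZ Γ a))
        (fun i : Fin (k+1) => pairE (w (i : ℕ)) (embGZ Γ b)) i₀ hi₀k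
        (fun j hj => hmin (j : ℕ) hj) hi₀ne
      exact this
    have hR : flagRel n n Γ w' a b ↔
        pairE (w' i₀) (embGZ Γ a) < pairE (w' i₀) (embGZ Γ b) := by
      have := lex_le_char (m := n) (fun i : Fin (n+1) => pairE (w' (i : ℕ)) (embGZ Γ a))
        (fun i : Fin (n+1) => pairE (w' (i : ℕ)) (embGZ Γ b)) i₀ (by omega)
        (fun j hj => by
          show pairE (w' (j : ℕ)) (embGZ Γ a) = pairE (w' (j : ℕ)) (embGZ Γ b)
          rw [hww' (j : ℕ) (by omega)]; exact hmin (j : ℕ) hj)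
        (by
          show pairE (w' i₀) (embGZ Γ a) ≠ pairE (w' i₀) (embGZ Γ b)
          rw [hww' i₀ hi₀k]; exact hi₀ne)
      exact this
    rw [hL, hR, hww' i₀ hi₀k]

/-- Antisymmetry of the preorder attached to a complete simplicial flag. -/
lemma antisymm_of_complete {n : ℕ} (Γ : AddSubgroup ℝ) (P' : ℕ → Set (Fin n → ℝ))
    (hsimp : IsSimplicialFlagOfCones n n (fun i => closedConeOver (P' i)))
    (w' : ℕ → ℝ × (Fin n → ℝ))
    (hw' : IsChoiceOfPoints n n (fun i => closedConeOver (P' i)) w')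
    (a b : Γ × (Fin n → ℤ)) (hab : flagRel n n Γ w' a b) (hba : flagRel n n Γ w' b a) :
    a = b := by
  classical
  obtain ⟨hflag, v, hvli, hvC⟩ := hsimp
  -- the chosen points span everything
  have hspan : ∀ m : ℕ, ∀ _hm : m ≤ n,
      v ⟨m, by omega⟩ ∈ Submodule.span ℝ (Set.range fun j : Fin (n + 1) => w' (j : ℕ)) := by
    intro m
    induction m using Nat.strong_induction_on with
    | _ m ih =>
      intro hm
      have hwm := hw' m hm
      have hmem : w' m ∈ coneGenUpTo v m := by
        have := hwm.1
        rwa [hvC m hm] at this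
      obtain ⟨lam, hnn, hz, hsum⟩ := hmem
      set M : Fin (n + 1) := ⟨m, by omega⟩ with hM
      have hMval : (M : ℕ) = m := rfl
      have hlamM : lam M ≠ 0 := by
        intro h0
        apply hwm.2
        cases m with
        | zero =>
          have : ∀ j : Fin (n+1), lam j = 0 := by
            intro j
            rcases Nat.eq_zero_or_pos (j : ℕ) with hj | hj
            · have : j = M := Fin.ext (by omega)
              rw [this]; exact h0
            · exact hz j hj
          have : w' 0 = 0 := by
            rw [hsum]
            exact Finset.sum_eq_zero fun j _ => by rw [this j, zero_smul]
          show w' 0 ∈ flagPrev (fun i => closedConeOver (P' i)) 0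
          rw [this]
          exact Set.mem_singleton 0
        | succ m' =>
          show w' (m' + 1) ∈ flagPrev (fun i => closedConeOver (P' i)) (m' + 1)
          show w' (m' + 1) ∈ closedConeOver (P' m')
          have hvc' : closedConeOver (P' m') = coneGenUpTo v m' := hvC m' (by omega)
          rw [hvc']
          refine ⟨lam, hnn, fun j hj => ?_, hsum⟩
          rcases Nat.lt_or_ge (j : ℕ) (m' + 1) with h | h
          · omega
          · rcases Nat.eq_or_lt_of_le h with h' | h'
            · have : j = M := Fin.ext (by omega)
              rw [this]; exact h0
            · exact hz j (by omega)
      -- express v M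
      have hsum2 : lam M • v M
          = w' m - ∑ j ∈ Finset.univ.erase M, lam j • v j := by
        rw [hsum, ← Finset.add_sum_erase Finset.univ (fun j => lam j • v j) (Finset.mem_univ M)]
        abel
      have hrest : ∑ j ∈ Finset.univ.erase M, lam j • v j
          ∈ Submodule.span ℝ (Set.range fun j : Fin (n + 1) => w' (j : ℕ)) := by
        apply Submodule.sum_mem
        intro j hj
        have hjM : j ≠ M := (Finset.mem_erase.1 hj).1
        rcases Nat.lt_or_ge (j : ℕ) m with hlt | hge
        · apply Submodule.smul_mem
          have := ih (j : ℕ) hlt (by omega)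
          have hcast : (⟨(j : ℕ), by omega⟩ : Fin (n+1)) = j := Fin.ext rfl
          rwa [hcast] at this
        · have : (j : ℕ) ≠ m := fun hh => hjM (Fin.ext hh)
          rw [hz j (by omega), zero_smul]
          exact Submodule.zero_mem _
      have hwmem : w' m ∈ Submodule.span ℝ (Set.range fun j : Fin (n + 1) => w' (j : ℕ)) := by
        apply Submodule.subset_span
        exact ⟨⟨m, by omega⟩, rfl⟩
      have hvM : lam M • v M
          ∈ Submodule.span ℝ (Set.range fun j : Fin (n + 1) => w' (j : ℕ)) := by
        rw [hsum2]
        exact Submodule.sub_mem _ hwmem hrest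
      have := Submodule.smul_mem _ (lam M)⁻¹ hvM
      rwa [smul_smul, inv_mul_cancel₀ hlamM, one_smul] at this
  have hspan_top : Submodule.span ℝ (Set.range fun j : Fin (n + 1) => w' (j : ℕ)) = ⊤ := by
    rw [eq_top_iff, ← hvli.span_eq_top_of_card_eq_finrank (by rw [finrank_V]; simp),
      Submodule.span_le]
    rintro x ⟨j, rfl⟩
    have := hspan (j : ℕ) j.is_le
    have hcast : (⟨(j : ℕ), by omega⟩ : Fin (n+1)) = j := Fin.ext rfl
    rwa [hcast] at this
  -- from lex antisymmetry, all pairings agree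
  have heq : ∀ i : Fin (n + 1), pairE (w' (i : ℕ)) (embGZ Γ a) = pairE (w' (i : ℕ)) (embGZ Γ b) := by
    have h := le_antisymm (hab : toLex _ ≤ toLex _) hba
    intro i
    exact congrFun (congrArg ofLex h) i
  set x : ℝ × (Fin n → ℝ) := embGZ Γ a - embGZ Γ b with hx
  have hker : ∀ i : Fin (n + 1), pairE (w' (i : ℕ)) x = 0 := by
    intro i
    rw [hx, pairE_sub, heq i, sub_self]
  have hxzero : x = 0 := by
    have hle : Submodule.span ℝ (Set.range fun j : Fin (n + 1) => w' (j : ℕ)) ≤ pairKer x := by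
      rw [Submodule.span_le]
      rintro y ⟨j, rfl⟩
      exact hker j
    rw [hspan_top] at hle
    have hxmem : pairE x x = 0 := hle (Submodule.mem_top)
    exact pairE_self_eq_zero hxmem
  have hemb : embGZ Γ a = embGZ Γ b := by
    have := sub_eq_zero.1 (hx ▸ hxzero)
    exact this
  -- injectivity of the embedding
  have h1 : a.1 = b.1 := Subtype.ext (congrArg Prod.fst hemb)
  have h2 : a.2 = b.2 := by
    funext i
    have := congrFun (congrArg Prod.snd hemb) i
    simp only [embGZ] at this
    exact_mod_cast this
  exact Prod.ext h1 h2

end RelAux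

/-- The preorder on `Γ × ℤⁿ` associated to a flag of polyhedra `P` (with
`c(P)` simplicial) is antisymmetric (i.e. a valuated monomial order) iff it is the preorder
associated to some complete flag of polyhedra in `ℝⁿ` (with simplicial cone flag). -/
theorem flag_preorder_antisymm_iff_complete_flag
    (n k : ℕ) (hn : 1 ≤ n) (Γ : AddSubgroup ℝ) (hΓ : Γ ≠ ⊥)
    (P : ℕ → Set (Fin n → ℝ)) (hP : IsFlagOfPolyhedra n k P)
    (hsimp : IsSimplicialFlagOfCones n k (fun i => closedConeOver (P i)))
    (w : ℕ → ℝ × (Fin n → ℝ))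
    (hw : IsChoiceOfPoints n k (fun i => closedConeOver (P i)) w) :
    (∀ a b : Γ × (Fin n → ℤ), flagRel n k Γ w a b → flagRel n k Γ w b a → a = b) ↔
      (∃ P' : ℕ → Set (Fin n → ℝ), IsFlagOfPolyhedra n n P' ∧
        IsSimplicialFlagOfCones n n (fun i => closedConeOver (P' i)) ∧
        ∃ w' : ℕ → ℝ × (Fin n → ℝ),
          IsChoiceOfPoints n n (fun i => closedConeOver (P' i)) w' ∧
          ∀ a b : Γ × (Fin n → ℤ), flagRel n k Γ w a b ↔ flagRel n n Γ w' a b) := by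
  classical
  constructor
  · -- forward direction
    intro hanti
    obtain ⟨hflag, v, hvli, hvC⟩ := hsimp
    -- k ≤ n
    have hkn : k ≤ n := by
      have hdim := (hP.1 k le_rfl).2.2.2
      have hle : polyDim (P k) ≤ n := by
        have h1 := Submodule.finrank_le (affineSpan ℝ (P k)).direction
        rw [Module.finrank_fin_fun] at h1
        exact h1
      omega
    -- first coordinates of v
    have hvfst : ∀ j : Fin (k + 1), 0 ≤ (v j).1 := by
      intro j
      have hmem : v j ∈ coneGenUpTo v (j : ℕ) := self_mem_coneGenUpTo v le_rfl
      have hC : closedConeOver (P (j : ℕ)) = coneGenUpTo v (j : ℕ) := hvC (j : ℕ) j.is_le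
      rw [← hC] at hmem
      exact hflag.2.1 (j : ℕ) j.is_le hmem
    have hv0 : 0 < (v 0).1 := by
      obtain ⟨x₀, hx₀⟩ := (hP.1 0 (Nat.zero_le k)).1
      have hmem : ((1 : ℝ), x₀) ∈ closedConeOver (P 0) := by
        apply subset_closure
        exact ⟨1, x₀, hx₀, one_pos, by rw [one_smul]⟩
      have hC0 : closedConeOver (P 0) = coneGenUpTo v 0 := hvC 0 (Nat.zero_le k)
      rw [hC0] at hmem
      obtain ⟨lam, hnn, hz, hsum⟩ := hmem
      have h1 : (1 : ℝ) = ∑ j, lam j * (v j).1 := by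
        have h := congrArg Prod.fst hsum
        rw [Prod.fst_sum] at h
        exact h
      have h2 : ∑ j, lam j * (v j).1 = lam 0 * (v 0).1 := by
        apply Finset.sum_eq_single 0
        · intro j _ hj
          have hjv : (j : ℕ) ≠ 0 := fun hh => hj (Fin.ext hh)
          rw [hz j (by omega), zero_mul]
        · intro h
          exact absurd (Finset.mem_univ 0) h
      rw [h2] at h1
      nlinarith [hnn 0, hvfst 0]
    -- extend to a basis
    obtain ⟨b, hbv, hbz⟩ := exists_basis_extension k hkn v hvli hv0
    have hb0 : 0 < (b 0).1 := by
      have h1 : b (Fin.castLE (by omega) (0 : Fin (k + 1))) = v 0 := hbv 0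
      have h2 : (Fin.castLE (by omega : k + 1 ≤ n + 1) (0 : Fin (k + 1))) = (0 : Fin (n + 1)) :=
        Fin.ext rfl
      rw [h2] at h1
      rw [h1]
      exact hv0
    have hbnn : ∀ j : Fin (n + 1), 0 ≤ (b j).1 := by
      intro j
      by_cases h : (j : ℕ) ≤ k
      · have heq : j = Fin.castLE (by omega : k + 1 ≤ n + 1) (⟨(j : ℕ), by omega⟩ : Fin (k + 1)) :=
          Fin.ext rfl
        rw [heq, hbv]
        exact hvfst _
      · rw [hbz j (by omega)]
    have hCeq : ∀ i : ℕ, closedConeOver (sliceSet b i) = coneGenUpTo (⇑b) i := fun i =>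
      (closedConeOver_sliceSet b hb0 hbnn i).trans (coneGenUpTo_eq_dualSet b i).symm
    have htrans : ∀ i : ℕ, i ≤ k → coneGenUpTo (⇑b) i = coneGenUpTo v i := fun i hik =>
      coneGenUpTo_transfer hkn v b hbv hik
    have hCP : ∀ i : ℕ, i ≤ k → closedConeOver (sliceSet b i) = closedConeOver (P i) := by
      intro i hik
      have h1 : closedConeOver (P i) = coneGenUpTo v i := hvC i hik
      rw [hCeq i, htrans i hik, ← h1]
    set w' : ℕ → ℝ × (Fin n → ℝ) :=
      fun i => if i ≤ k then w i else if h : i ≤ n then b ⟨i, by omega⟩ else 0 with hw'def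
    have hww' : ∀ i, i ≤ k → w' i = w i := by
      intro i hik
      show (if i ≤ k then w i else _) = w i
      rw [if_pos hik]
    refine ⟨fun i => sliceSet b i, ?_, ?_, w', ?_, ?_⟩
    · -- flag of polyhedra
      constructor
      · intro i hi
        exact ⟨sliceSet_nonempty b hb0 i, sliceSet_isPolyhedron b i, sliceSet_hasNoLine b i,
          sliceSet_polyDim b hb0 hbnn i (by omega)⟩
      · intro i _hi
        exact sliceSet_mono b (dualSet_mono b (Nat.le_succ i))
    · -- simplicial flag of cones
      refine ⟨⟨?_, ?_, ?_, ?_⟩, ⇑b, b.linearIndependent, fun i _hi => hCeq i⟩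
      · intro i _hi
        show IsSCPCone (closedConeOver (sliceSet b i))
        rw [closedConeOver_sliceSet b hb0 hbnn i]
        exact dualSet_isSCP b i
      · intro i _hi
        show closedConeOver (sliceSet b i) ⊆ {w | 0 ≤ w.1}
        rw [closedConeOver_sliceSet b hb0 hbnn i]
        intro x hx
        exact dualSet_fst_nonneg b hbnn hx
      · intro i hi
        show spanDim (closedConeOver (sliceSet b i)) = i + 1
        show Module.finrank ℝ (Submodule.span ℝ (closedConeOver (sliceSet b i))) = i + 1
        rw [closedConeOver_sliceSet b hb0 hbnn i]
        exact spanDim_dualSet b i (by omega)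
      · intro i _hi
        show closedConeOver (sliceSet b i) ⊆ closedConeOver (sliceSet b (i + 1))
        rw [closedConeOver_sliceSet b hb0 hbnn i, closedConeOver_sliceSet b hb0 hbnn (i + 1)]
        exact dualSet_mono b (Nat.le_succ i)
    · -- choice of points
      intro i hi
      by_cases hik : i ≤ k
      · have hwi := hw i hik
        have hww : w' i = w i := hww' i hik
        rw [hww]
        constructor
        · show w i ∈ closedConeOver (sliceSet b i)
          rw [hCP i hik]
          exact hwi.1
        · cases i with
          | zero =>
            exact hwi.2
          | succ i' =>
            show w (i' + 1) ∉ closedConeOver (sliceSet b i')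
            rw [hCP i' (by omega)]
            exact hwi.2
      · have hww : w' i = b ⟨i, by omega⟩ := by
          show (if i ≤ k then w i else if h : i ≤ n then b ⟨i, by omega⟩ else 0) = _
          rw [if_neg hik, dif_pos hi]
        rw [hww]
        constructor
        · show b ⟨i, by omega⟩ ∈ closedConeOver (sliceSet b i)
          rw [hCeq i]
          exact self_mem_coneGenUpTo (⇑b) (le_of_eq rfl)
        · cases i with
          | zero => omega
          | succ i' =>
            show b ⟨i' + 1, by omega⟩ ∉ closedConeOver (sliceSet b i')
            rw [closedConeOver_sliceSet b hb0 hbnn i']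
            intro hmem
            have hval : ((⟨i' + 1, by omega⟩ : Fin (n + 1)) : ℕ) = i' + 1 := rfl
            have h1 := (hmem ⟨i' + 1, by omega⟩).2 (by rw [hval]; omega)
            simp only [Module.Basis.coord_apply, Module.Basis.repr_self] at h1
            rw [Finsupp.single_eq_same] at h1
            exact one_ne_zero h1
    · -- the preorders agree
      exact fun a b => flagRel_iff_of_agree hkn Γ w w' hww' hanti a b
  · -- backward direction
    rintro ⟨P', _hP', hsimp', w', hw', hiff⟩ a b hab hba
    exact antisymm_of_complete Γ P' hsimp' w' hw' a b ((hiff a b).1 hab) ((hiff b a).1 hba)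

end
end

section
/- Let P_• = (P_0 ⊆ ⋯ ⊆ P_k) be a flag of polyhedra in ℝⁿ with c(P_•) simplicial. Write P_0 = {ξ_0}, and for 1 ≤ i ≤ k choose ζ_i ∈ P_i ∖ P_{i−1}. Let H = {u ∈ ℤⁿ : ⟨ξ_0,u⟩ ∈ Γ and ⟨ζ_i,u⟩ = ⟨ξ_0,u⟩ for all 1 ≤ i ≤ k}, a subgroup of ℤⁿ. Then the minimum of dim Q over all Γ-rational polyhedra Q that are Γ-rational neighborhoods of P_• exists and equals n − rank(H). -/
open Finset

noncomputable section

section Aux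

open Finset

variable {n : ℕ}

/-- The real pairing. -/
def pairR {n : ℕ} (x v : Fin n → ℝ) : ℝ := ∑ i, x i * v i

/-- Cast an integer vector to a real vector. -/
def castZ {n : ℕ} (u : Fin n → ℤ) : Fin n → ℝ := fun i => (u i : ℝ)

lemma pairZ_eq_pairR (x : Fin n → ℝ) (u : Fin n → ℤ) : pairZ x u = pairR x (castZ u) := rfl

/-- The pairing as a linear map in the first argument. -/
def pairLin {n : ℕ} (v : Fin n → ℝ) : (Fin n → ℝ) →ₗ[ℝ] ℝ where
  toFun := fun x => pairR x v
  map_add' := by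
    intro x y
    simp only [pairR, Pi.add_apply, add_mul, Finset.sum_add_distrib]
  map_smul' := by
    intro c x
    simp only [pairR, Pi.smul_apply, smul_eq_mul, RingHom.id_apply, Finset.mul_sum, mul_assoc]

lemma pairLin_apply (v x : Fin n → ℝ) : pairLin v x = pairR x v := rfl

lemma pairZ_add_right (x : Fin n → ℝ) (u w : Fin n → ℤ) :
    pairZ x (u + w) = pairZ x u + pairZ x w := by
  simp only [pairZ, Pi.add_apply, Int.cast_add, mul_add, Finset.sum_add_distrib]

lemma pairZ_neg_right (x : Fin n → ℝ) (u : Fin n → ℤ) : pairZ x (-u) = - pairZ x u := by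
  simp [pairZ, Finset.sum_neg_distrib]

lemma pairZ_zsmul_right (x : Fin n → ℝ) (m : ℤ) (u : Fin n → ℤ) :
    pairZ x (m • u) = m * pairZ x u := by
  simp only [pairZ, Pi.smul_apply, smul_eq_mul, Int.cast_mul, Finset.mul_sum]
  exact Finset.sum_congr rfl fun i _ => by ring

lemma pairR_self_eq_zero {w : Fin n → ℝ} (h : pairR w w = 0) : w = 0 := by
  have hsq : ∀ i ∈ Finset.univ, (0:ℝ) ≤ w i * w i := fun i _ => mul_self_nonneg _
  funext i
  have := (Finset.sum_eq_zero_iff_of_nonneg hsq).mp h i (Finset.mem_univ i)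
  have := mul_self_eq_zero.mp this
  simpa using this

/-- Convexity of an intersection of linear half-spaces. -/
lemma convex_pairR_le {q : ℕ} (u : Fin q → (Fin n → ℝ)) (γ : Fin q → ℝ) :
    Convex ℝ {x : Fin n → ℝ | ∀ l, pairR x (u l) ≤ γ l} := by
  intro x hx y hy a b ha hb hab
  intro l
  have : pairR (a • x + b • y) (u l) = a * pairR x (u l) + b * pairR y (u l) := by
    rw [← pairLin_apply, map_add, map_smul, map_smul]; rfl
  rw [this]
  calc a * pairR x (u l) + b * pairR y (u l) ≤ a * γ l + b * γ l :=
        add_le_add (mul_le_mul_of_nonneg_left (hx l) ha) (mul_le_mul_of_nonneg_left (hy l) hb)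
    _ = γ l := by rw [← add_mul, hab, one_mul]

lemma isClosed_pairR_le {q : ℕ} (u : Fin q → (Fin n → ℝ)) (γ : Fin q → ℝ) :
    IsClosed {x : Fin n → ℝ | ∀ l, pairR x (u l) ≤ γ l} := by
  have : {x : Fin n → ℝ | ∀ l, pairR x (u l) ≤ γ l} = ⋂ l, {x | pairR x (u l) ≤ γ l} := by
    ext x; simp
  rw [this]
  refine isClosed_iInter fun l => isClosed_le ?_ continuous_const
  exact continuous_finset_sum _ fun i _ => (continuous_apply i).mul continuous_const

lemma IsPolyhedron.convex {P : Set (Fin n → ℝ)} (h : IsPolyhedron P) : Convex ℝ P := by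
  obtain ⟨q, a, b, rfl⟩ := h
  have : {x : Fin n → ℝ | ∀ l, ∑ i, a l i * x i ≤ b l}
      = {x : Fin n → ℝ | ∀ l, pairR x (a l) ≤ b l} := by
    ext x
    refine forall_congr' fun l => ?_
    rw [pairR]
    rw [show ∑ i, a l i * x i = ∑ i, x i * a l i from Finset.sum_congr rfl fun i _ => mul_comm _ _]
  rw [this]
  exact convex_pairR_le _ _

lemma IsPolyhedron.isClosed {P : Set (Fin n → ℝ)} (h : IsPolyhedron P) : IsClosed P := by
  obtain ⟨q, a, b, rfl⟩ := h
  have : {x : Fin n → ℝ | ∀ l, ∑ i, a l i * x i ≤ b l}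
      = {x : Fin n → ℝ | ∀ l, pairR x (a l) ≤ b l} := by
    ext x
    refine forall_congr' fun l => ?_
    rw [pairR]
    rw [show ∑ i, a l i * x i = ∑ i, x i * a l i from Finset.sum_congr rfl fun i _ => mul_comm _ _]
  rw [this]
  exact isClosed_pairR_le _ _

lemma convex_gammaRat {q : ℕ} (u : Fin q → (Fin n → ℤ)) (γ : Fin q → ℝ) :
    Convex ℝ {x : Fin n → ℝ | ∀ l, pairZ x (u l) ≤ γ l} := by
  have : {x : Fin n → ℝ | ∀ l, pairZ x (u l) ≤ γ l}
      = {x : Fin n → ℝ | ∀ l, pairR x (castZ (u l)) ≤ γ l} := rfl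
  rw [this]; exact convex_pairR_le _ _

/-- A point of `P` lifts into the closed cone at level 1. -/
lemma one_mem_closedConeOver {P : Set (Fin n → ℝ)} {x : Fin n → ℝ} (hx : x ∈ P) :
    ((1:ℝ), x) ∈ closedConeOver P :=
  subset_closure ⟨1, x, hx, one_pos, by simp⟩

/-- The slice of the closed cone at level 1 is `P` when `P` is closed. -/
lemma mem_of_one_mem_closedConeOver {P : Set (Fin n → ℝ)} (hP : IsClosed P) {x : Fin n → ℝ}
    (hx : ((1:ℝ), x) ∈ closedConeOver P) : x ∈ P := by
  rw [closedConeOver] at hx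
  obtain ⟨g, hgS, hg⟩ := mem_closure_iff_seq_limit.mp hx
  choose lam xx hxx hpos heq using hgS
  have h1 : Filter.Tendsto (fun m => lam m) Filter.atTop (nhds 1) := by
    have := (continuous_fst.tendsto ((1:ℝ), x)).comp hg
    refine this.congr fun m => ?_
    simp [Function.comp, heq m]
  have h2 : Filter.Tendsto (fun m => lam m • xx m) Filter.atTop (nhds x) := by
    have := (continuous_snd.tendsto ((1:ℝ), x)).comp hg
    refine this.congr fun m => ?_
    simp [Function.comp, heq m]
  have h3 : Filter.Tendsto (fun m => (lam m)⁻¹ • (lam m • xx m)) Filter.atTop (nhds x) := by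
    have := ((h1.inv₀ one_ne_zero).smul h2)
    simpa using this
  have h4 : Filter.Tendsto xx Filter.atTop (nhds x) := by
    refine h3.congr fun m => ?_
    rw [inv_smul_smul₀ (hpos m).ne']
  exact hP.mem_of_tendsto h4 (Filter.Eventually.of_forall hxx)

/-- Moving from an intrinsic-interior point away from another point of the set stays in it. -/
lemma intrinsicInterior_step {s : Set (Fin n → ℝ)} {x z : Fin n → ℝ}
    (hx : x ∈ intrinsicInterior ℝ s) (hz : z ∈ s) :
    ∃ δ : ℝ, 0 < δ ∧ x + δ • (x - z) ∈ s := by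
  obtain ⟨x', hx', rfl⟩ := hx
  obtain ⟨ε, hε, hball⟩ := Metric.isOpen_iff.mp isOpen_interior x' hx'
  set d := (x' : Fin n → ℝ) - z with hd
  set δ := ε / (2 * (‖d‖ + 1)) with hδ
  have hδpos : 0 < δ := by positivity
  have hmem : (x' : Fin n → ℝ) + δ • d ∈ affineSpan ℝ s := by
    have := (affineSpan ℝ s).smul_vsub_vadd_mem δ x'.2 (subset_affineSpan ℝ s hz) x'.2
    simpa [vsub_eq_sub, vadd_eq_add, add_comm] using this
  refine ⟨δ, hδpos, ?_⟩
  have hb : (⟨_, hmem⟩ : affineSpan ℝ s) ∈ Metric.ball x' ε := by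
    rw [Metric.mem_ball, Subtype.dist_eq, dist_eq_norm]
    have he : ((x' : Fin n → ℝ) + δ • d) - (x' : Fin n → ℝ) = δ • d := add_sub_cancel_left _ _
    rw [he, norm_smul, Real.norm_eq_abs, abs_of_pos hδpos]
    have h1 : δ * ‖d‖ ≤ ε / 2 := by
      rw [hδ]
      rw [div_mul_eq_mul_div]
      rw [div_le_div_iff₀ (by positivity) (by positivity)]
      nlinarith [norm_nonneg d]
    linarith
  exact interior_subset (s := (Subtype.val ⁻¹' s : Set (affineSpan ℝ s))) (hball hb)

end Aux

section Flag

open Finset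

variable {n k : ℕ} {P : ℕ → Set (Fin n → ℝ)}

lemma flag_mono (hP : IsFlagOfPolyhedra n k P) {i j : ℕ} (hij : i ≤ j) (hj : j ≤ k) :
    P i ⊆ P j := by
  induction j with
  | zero =>
    have : i = 0 := by omega
    subst this; exact subset_refl _
  | succ m ih =>
    rcases Nat.eq_or_lt_of_le hij with h | h
    · exact h ▸ le_refl _
    · exact (ih (by omega) (by omega)).trans (hP.2 m hj)

lemma coeff_unique {v : Fin (k+1) → ℝ × (Fin n → ℝ)} (hv : LinearIndependent ℝ v)
    {lam mu : Fin (k+1) → ℝ} (h : ∑ j, lam j • v j = ∑ j, mu j • v j) : lam = mu := by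
  have hz : ∑ j, (lam - mu) j • v j = 0 := by
    simp only [Pi.sub_apply, sub_smul, Finset.sum_sub_distrib, h, sub_self]
  have := Fintype.linearIndependent_iff.mp hv (lam - mu) hz
  funext j
  have := this j
  simpa [sub_eq_zero] using this

lemma mem_coneGenUpTo_of_mem {v : Fin (k+1) → ℝ × (Fin n → ℝ)}
    (hC : ∀ i ≤ k, closedConeOver (P i) = coneGenUpTo v i) {i : ℕ} (hi : i ≤ k)
    {x : Fin n → ℝ} (hx : x ∈ P i) : ((1:ℝ), x) ∈ coneGenUpTo v i :=
  (hC i hi) ▸ one_mem_closedConeOver hx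

lemma mem_affineSpan_coeff {v : Fin (k+1) → ℝ × (Fin n → ℝ)}
    (hC : ∀ i ≤ k, closedConeOver (P i) = coneGenUpTo v i) {i : ℕ} (hi : i ≤ k)
    {x : Fin n → ℝ} (hx : x ∈ affineSpan ℝ (P i)) :
    ∃ c : Fin (k+1) → ℝ, (∀ j : Fin (k+1), i < (j:ℕ) → c j = 0) ∧
      ((1:ℝ), x) = ∑ j, c j • v j := by
  set T : AffineSubspace ℝ (Fin n → ℝ) :=
    { carrier := {y | ∃ c : Fin (k+1) → ℝ, (∀ j : Fin (k+1), i < (j:ℕ) → c j = 0) ∧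
        ((1:ℝ), y) = ∑ j, c j • v j}
      smul_vsub_vadd_mem' := by
        rintro r p1 p2 p3 ⟨c1, hc1v, hc1⟩ ⟨c2, hc2v, hc2⟩ ⟨c3, hc3v, hc3⟩
        refine ⟨fun j => r * (c1 j - c2 j) + c3 j, fun j hj => by
          show r * (c1 j - c2 j) + c3 j = 0
          rw [hc1v j hj, hc2v j hj, hc3v j hj]; ring, ?_⟩
        have hid : ((1:ℝ), r • (p1 -ᵥ p2) +ᵥ p3)
            = r • (((1:ℝ), p1) - ((1:ℝ), p2)) + ((1:ℝ), p3) := by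
          rw [Prod.ext_iff]
          constructor
          · simp
          · simp [vsub_eq_sub, vadd_eq_add]
        rw [hid, hc1, hc2, hc3, ← Finset.sum_sub_distrib, Finset.smul_sum,
          ← Finset.sum_add_distrib]
        exact Finset.sum_congr rfl fun j _ => by module } with hT
  have hPT : P i ⊆ (T : Set (Fin n → ℝ)) := by
    intro y hy
    obtain ⟨lam, _, hvan, heq⟩ := mem_coneGenUpTo_of_mem hC hi hy
    exact ⟨lam, hvan, heq⟩
  exact (affineSpan_le.mpr hPT) hx

lemma zeta_coeff (hP : IsFlagOfPolyhedra n k P) {v : Fin (k+1) → ℝ × (Fin n → ℝ)}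
    (hv : LinearIndependent ℝ v)
    (hC : ∀ i ≤ k, closedConeOver (P i) = coneGenUpTo v i) {i : ℕ}
    (h1 : 1 ≤ i) (hik : i ≤ k) {z : Fin n → ℝ} (hz : z ∈ P i) (hznot : z ∉ P (i-1)) :
    ∃ b : Fin (k+1) → ℝ, (∀ j, 0 ≤ b j) ∧ (∀ j : Fin (k+1), i < (j:ℕ) → b j = 0) ∧
      ((1:ℝ), z) = ∑ j, b j • v j ∧ 0 < b ⟨i, Nat.lt_succ_of_le hik⟩ := by
  obtain ⟨b, hbpos, hbvan, hbeq⟩ := mem_coneGenUpTo_of_mem hC hik hz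
  refine ⟨b, hbpos, hbvan, hbeq, ?_⟩
  rcases lt_or_eq_of_le (hbpos ⟨i, Nat.lt_succ_of_le hik⟩) with h | h
  · exact h
  · exfalso
    have hmem : ((1:ℝ), z) ∈ coneGenUpTo v (i-1) := by
      refine ⟨b, hbpos, fun j hj => ?_, hbeq⟩
      by_cases hji : (j : ℕ) = i
      · have : j = ⟨i, Nat.lt_succ_of_le hik⟩ := Fin.ext hji
        rw [this, ← h]
      · exact hbvan j (by omega)
    rw [← hC (i-1) (by omega)] at hmem
    exact hznot (mem_of_one_mem_closedConeOver
      ((hP.1 (i-1) (by omega)).2.1.isClosed) hmem)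

lemma zeta_not_mem_affineSpan (hP : IsFlagOfPolyhedra n k P)
    {v : Fin (k+1) → ℝ × (Fin n → ℝ)} (hv : LinearIndependent ℝ v)
    (hC : ∀ i ≤ k, closedConeOver (P i) = coneGenUpTo v i) {i : ℕ}
    (h1 : 1 ≤ i) (hik : i ≤ k) {z : Fin n → ℝ} (hz : z ∈ P i) (hznot : z ∉ P (i-1)) :
    z ∉ affineSpan ℝ (P (i-1)) := by
  intro hmem
  obtain ⟨b, hbpos, hbvan, hbeq, hbi⟩ := zeta_coeff hP hv hC h1 hik hz hznot
  obtain ⟨c, hcvan, hceq⟩ := mem_affineSpan_coeff hC (i := i-1) (by omega) hmem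
  have : b = c := coeff_unique hv (hbeq.symm.trans hceq)
  have hc0 : c ⟨i, Nat.lt_succ_of_le hik⟩ = 0 := hcvan _ (by simp; omega)
  rw [this, hc0] at hbi
  exact lt_irrefl _ hbi

lemma relint_not_mem_affineSpan (hP : IsFlagOfPolyhedra n k P)
    {v : Fin (k+1) → ℝ × (Fin n → ℝ)} (hv : LinearIndependent ℝ v)
    (hC : ∀ i ≤ k, closedConeOver (P i) = coneGenUpTo v i) {i : ℕ}
    (h1 : 1 ≤ i) (hik : i ≤ k) {z : Fin n → ℝ} (hz : z ∈ P i) (hznot : z ∉ P (i-1))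
    {x : Fin n → ℝ} (hx : x ∈ intrinsicInterior ℝ (P i)) :
    x ∉ affineSpan ℝ (P (i-1)) := by
  intro hmem
  obtain ⟨b, hbpos, hbvan, hbeq, hbi⟩ := zeta_coeff hP hv hC h1 hik hz hznot
  obtain ⟨c, hcvan, hceq⟩ := mem_affineSpan_coeff hC (i := i-1) (by omega) hmem
  obtain ⟨δ, hδ, hy⟩ := intrinsicInterior_step hx hz
  obtain ⟨μ, hμpos, hμvan, hμeq⟩ := mem_coneGenUpTo_of_mem hC hik hy
  have hid : ((1:ℝ), x + δ • (x - z)) = (1+δ) • ((1:ℝ), x) - δ • ((1:ℝ), z) := by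
    rw [Prod.ext_iff]
    constructor
    · simp
    · show x + δ • (x - z) = (1+δ) • x - δ • z
      module
  have hkey : ∑ j, μ j • v j = ∑ j, ((1+δ) * c j - δ * b j) • v j := by
    rw [← hμeq, hid, hceq, hbeq, Finset.smul_sum, Finset.smul_sum, ← Finset.sum_sub_distrib]
    exact Finset.sum_congr rfl fun j _ => by module
  have hμc := coeff_unique hv hkey
  have hc0 : c ⟨i, Nat.lt_succ_of_le hik⟩ = 0 := hcvan _ (by simp; omega)
  have : μ ⟨i, Nat.lt_succ_of_le hik⟩ = (1+δ) * 0 - δ * b ⟨i, Nat.lt_succ_of_le hik⟩ := by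
    rw [← hc0]; exact congrFun hμc _
  have hneg := hμpos ⟨i, Nat.lt_succ_of_le hik⟩
  rw [this] at hneg
  nlinarith

end Flag

section SpanInduction

open Finset FiniteDimensional

variable {n k : ℕ} {P : ℕ → Set (Fin n → ℝ)} {ξ0 : Fin n → ℝ}

lemma xi0_mem (hP : IsFlagOfPolyhedra n k P) (hξ0 : P 0 = {ξ0}) {i : ℕ} (hi : i ≤ k) :
    ξ0 ∈ P i :=
  flag_mono hP (Nat.zero_le i) hi (hξ0 ▸ rfl)

/-- If a linear functional agrees with its value at `ξ0` on a system of points `y i ∈ P i`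
with `y i ∉ aff (P (i-1))`, then it is constant on the affine span of each `P i`. -/
lemma const_on_affineSpan (hP : IsFlagOfPolyhedra n k P) (hξ0 : P 0 = {ξ0})
    (y : ℕ → Fin n → ℝ) (hy0 : y 0 = ξ0)
    (hyP : ∀ i, 1 ≤ i → i ≤ k → y i ∈ P i ∧ y i ∉ affineSpan ℝ (P (i-1)))
    (f : (Fin n → ℝ) →ₗ[ℝ] ℝ) (hf : ∀ i ≤ k, f (y i) = f ξ0) :
    ∀ i ≤ k, ∀ x ∈ affineSpan ℝ (P i), f x = f ξ0 := by
  intro i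
  induction i with
  | zero =>
    intro _ x hx
    rw [hξ0] at hx
    have hξm : ξ0 ∈ affineSpan ℝ ({ξ0} : Set (Fin n → ℝ)) :=
      subset_affineSpan ℝ _ rfl
    have hd := AffineSubspace.vsub_mem_direction hx hξm
    rw [direction_affineSpan, vectorSpan_singleton] at hd
    have : x - ξ0 = 0 := hd
    have : x = ξ0 := by linear_combination (norm := abel) this
    rw [this]
  | succ i ih =>
    intro hik x hx
    have hik' : i ≤ k := by omega
    obtain ⟨hwP, hwnot⟩ := hyP (i+1) (by omega) hik
    simp only [Nat.add_sub_cancel] at hwnot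
    set w := y (i+1) with hw
    set Dprev := (affineSpan ℝ (P i)).direction with hDprev
    set D := (affineSpan ℝ (P (i+1))).direction with hD
    have hDpdim : Module.finrank ℝ Dprev = i := (hP.1 i hik').2.2.2
    have hDdim : Module.finrank ℝ D = i + 1 := (hP.1 (i+1) hik).2.2.2
    have hle : Dprev ≤ D := AffineSubspace.direction_le (affineSpan_mono ℝ (hP.2 i hik))
    have hξi : ξ0 ∈ affineSpan ℝ (P i) := subset_affineSpan ℝ _ (xi0_mem hP hξ0 hik')
    have hξi1 : ξ0 ∈ affineSpan ℝ (P (i+1)) := subset_affineSpan ℝ _ (xi0_mem hP hξ0 hik)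
    set u0 := w - ξ0 with hu0
    have hu0D : u0 ∈ D := AffineSubspace.vsub_mem_direction (subset_affineSpan ℝ _ hwP) hξi1
    have hu0not : u0 ∉ Dprev := by
      intro h
      apply hwnot
      have := AffineSubspace.vadd_mem_of_mem_direction h hξi
      simpa [hu0, vadd_eq_add, sub_add_cancel] using this
    set D' := Dprev ⊔ Submodule.span ℝ {u0} with hD'
    have hle' : D' ≤ D := sup_le hle ((Submodule.span_singleton_le_iff_mem _ _).mpr hu0D)
    have hlt : Dprev < D' := by
      refine lt_of_le_of_ne le_sup_left fun h => ?_
      have : u0 ∈ D' := Submodule.mem_sup_right (Submodule.mem_span_singleton_self u0)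
      rw [← h] at this
      exact hu0not this
    have h1 : i + 1 ≤ Module.finrank ℝ D' := by
      have := Submodule.finrank_lt_finrank_of_lt hlt
      omega
    have h2 : Module.finrank ℝ D' ≤ i + 1 := by
      have := Submodule.finrank_mono hle'
      omega
    have heqD : D' = D := Submodule.eq_of_le_of_finrank_eq hle' (by omega)
    have hxd : x - ξ0 ∈ D := AffineSubspace.vsub_mem_direction hx hξi1
    rw [← heqD] at hxd
    obtain ⟨d, hd, z, hzmem, hdz⟩ := Submodule.mem_sup.mp hxd
    obtain ⟨c, rfl⟩ := Submodule.mem_span_singleton.mp hzmem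
    have hfd : f d = 0 := by
      have hker : Submodule.span ℝ ((P i) -ᵥ (P i)) ≤ LinearMap.ker f := by
        rw [Submodule.span_le]
        rintro _ ⟨p, hp, q, hq, rfl⟩
        have hfp := ih hik' p (subset_affineSpan ℝ _ hp)
        have hfq := ih hik' q (subset_affineSpan ℝ _ hq)
        simp only [SetLike.mem_coe, LinearMap.mem_ker, vsub_eq_sub, map_sub, hfp, hfq, sub_self]
      have : d ∈ Submodule.span ℝ ((P i) -ᵥ (P i)) := by
        rw [← vectorSpan_def, ← direction_affineSpan]
        exact hd
      exact hker this
    have hfu0 : f u0 = 0 := by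
      rw [hu0, map_sub, hf (i+1) hik, sub_self]
    have hfx : f (x - ξ0) = 0 := by
      rw [← hdz, map_add, map_smul, hfd, hfu0, smul_eq_mul, mul_zero, add_zero]
    rw [map_sub] at hfx
    linarith

end SpanInduction

section Duality

open Finset

variable {n : ℕ}

lemma pairR_comm (x v : Fin n → ℝ) : pairR x v = pairR v x :=
  Finset.sum_congr rfl fun i _ => mul_comm _ _

lemma pairR_smul_right (x : Fin n → ℝ) (c : ℝ) (v : Fin n → ℝ) :
    pairR x (c • v) = c * pairR x v := by
  simp only [pairR, Pi.smul_apply, smul_eq_mul, Finset.mul_sum]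
  exact Finset.sum_congr rfl fun i _ => by ring

/-- The pairing with a fixed left argument, as an additive hom in the integer argument. -/
def pairZHom (x : Fin n → ℝ) : (Fin n → ℤ) →+ ℝ where
  toFun := fun u => pairZ x u
  map_zero' := by simp [pairZ]
  map_add' := fun u w => pairZ_add_right x u w

/-- The space of real vectors orthogonal to all elements of `H`. -/
def HperpSub (H : AddSubgroup (Fin n → ℤ)) : Submodule ℝ (Fin n → ℝ) where
  carrier := {w | ∀ u ∈ H, pairZ w u = 0}
  add_mem' := by
    intro x y hx hy u hu
    show pairZ (x + y) u = 0
    rw [pairZ_eq_pairR, ← pairLin_apply, map_add]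
    have h1 := hx u hu
    have h2 := hy u hu
    rw [pairZ_eq_pairR, ← pairLin_apply] at h1 h2
    rw [h1, h2, add_zero]
  zero_mem' := by
    intro u hu
    show pairZ 0 u = 0
    simp [pairZ]
  smul_mem' := by
    intro c x hx u hu
    show pairZ (c • x) u = 0
    rw [pairZ_eq_pairR, ← pairLin_apply, map_smul]
    have h1 := hx u hu
    rw [pairZ_eq_pairR, ← pairLin_apply] at h1
    rw [h1, smul_zero]

lemma mem_toIntSubmodule' {M : Type*} [AddCommGroup M] {H : AddSubgroup M} {x : M} :
    x ∈ AddSubgroup.toIntSubmodule H ↔ x ∈ H := Iff.rfl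

lemma exists_gens (H : AddSubgroup (Fin n → ℤ)) :
    ∃ (h : ℕ) (U : Fin h → (Fin n → ℤ)),
      h = Module.finrank ℤ H ∧ h ≤ n ∧ (∀ j, U j ∈ H) ∧
      (∀ x : Fin n → ℝ, (∀ j, pairZ x (U j) = 0) → ∀ u ∈ H, pairZ x u = 0) ∧
      Module.finrank ℝ (HperpSub H) + h = n := by
  classical
  set HS : Submodule ℤ (Fin n → ℤ) := AddSubgroup.toIntSubmodule H with hHS
  obtain ⟨h, ⟨bM, bN, f, a, hsnf⟩⟩ := HS.smithNormalForm (Pi.basisFun ℤ (Fin n))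
  -- finrank of H
  have hrank : Module.finrank ℤ H = h := by
    have e : H ≃+ HS := {
      toFun := fun x => ⟨x.1, mem_toIntSubmodule'.2 x.2⟩
      invFun := fun x => ⟨x.1, mem_toIntSubmodule'.1 x.2⟩
      left_inv := fun x => rfl
      right_inv := fun x => rfl
      map_add' := fun x y => rfl }
    rw [e.toIntLinearEquiv.finrank_eq, Module.finrank_eq_card_basis bN, Fintype.card_fin]
  have hhn : h ≤ n := by
    have := Fintype.card_le_of_injective f f.injective
    simpa using this
  -- a j ≠ 0
  have ha : ∀ j, a j ≠ 0 := by
    intro j hj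
    have h0 : (bN j : Fin n → ℤ) = 0 := by rw [hsnf j, hj, zero_smul]
    exact Module.Basis.ne_zero bN j (by exact_mod_cast Subtype.ext h0)
  -- real casts of bM form an independent family
  set W : Fin n → (Fin n → ℝ) := fun i => castZ (bM i) with hW
  have hWind : LinearIndependent ℝ W := by
    set A : Matrix (Fin n) (Fin n) ℤ := (Pi.basisFun ℤ (Fin n)).toMatrix ⇑bM with hA
    have : Invertible A := (Pi.basisFun ℤ (Fin n)).invertibleToMatrix bM
    have hdet : IsUnit A.det := (Matrix.isUnit_iff_isUnit_det A).mp (isUnit_of_invertible A)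
    set AR : Matrix (Fin n) (Fin n) ℝ := A.map (Int.cast : ℤ → ℝ) with hAR
    have hdetAR : IsUnit AR.det := by
      have hmap : AR.det = ((A.det : ℤ) : ℝ) := ((Int.castRingHom ℝ).map_det A).symm
      rcases Int.isUnit_iff.mp hdet with h1 | h1 <;>
        rw [hmap, h1] <;> norm_num
    have hcols := Matrix.linearIndependent_cols_iff_isUnit.mpr
      ((Matrix.isUnit_iff_isUnit_det AR).mpr hdetAR)
    have hfun : (fun i => AR.transpose i) = W := by
      funext i j
      simp [hAR, hA, Matrix.transpose_apply, Matrix.map_apply, Module.Basis.toMatrix_apply,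
        Pi.basisFun_repr, hW, castZ]
    rw [← hfun]; exact hcols
  have hWspan : Submodule.span ℝ (Set.range W) = ⊤ := by
    apply Submodule.eq_top_of_finrank_eq
    rw [finrank_span_eq_card hWind]
    simp [Module.finrank_pi]
  -- the evaluation map
  set Φ : (Fin n → ℝ) →ₗ[ℝ] (Fin n → ℝ) := LinearMap.pi (fun i => pairLin (W i)) with hΦ
  have hΦinj : Function.Injective Φ := by
    rw [← LinearMap.ker_eq_bot]
    rw [Submodule.eq_bot_iff]
    intro w hw
    have hw' : ∀ i, pairR w (W i) = 0 := by
      intro i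
      have := congrFun (hw : Φ w = 0) i
      simpa [hΦ, LinearMap.pi_apply, pairLin_apply] using this
    have hall : ∀ v, pairR v w = 0 := by
      intro v
      have hv : v ∈ Submodule.span ℝ (Set.range W) := hWspan ▸ Submodule.mem_top
      induction hv using Submodule.span_induction with
      | mem z hz =>
        obtain ⟨i, rfl⟩ := hz
        rw [← pairR_comm]
        exact hw' i
      | zero => simp [pairR]
      | add z1 z2 _ _ h1 h2 => rw [← pairLin_apply, map_add, pairLin_apply, pairLin_apply, h1, h2, add_zero]
      | smul c z _ h1 => rw [← pairLin_apply, map_smul, pairLin_apply, h1, smul_zero]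
    exact pairR_self_eq_zero (by rw [pairR_comm]; exact hall w)
  have hΦsurj : Function.Surjective Φ := LinearMap.injective_iff_surjective.mp hΦinj
  set ψ : (Fin n → ℝ) →ₗ[ℝ] (Fin h → ℝ) := (LinearMap.funLeft ℝ ℝ f).comp Φ with hψ
  have hψsurj : Function.Surjective ψ :=
    (LinearMap.funLeft_surjective_of_injective ℝ ℝ f f.injective).comp hΦsurj
  -- generators
  set U : Fin h → (Fin n → ℤ) := fun j => (bN j : Fin n → ℤ) with hU
  have hUH : ∀ j, U j ∈ H := fun j => mem_toIntSubmodule'.1 (bN j).2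
  have hUpair : ∀ (x : Fin n → ℝ) j, pairZ x (U j) = (a j : ℝ) * pairR x (W (f j)) := by
    intro x j
    have hbn : U j = a j • bM (f j) := hsnf j
    rw [hbn, pairZ_eq_pairR]
    have : castZ (a j • bM (f j)) = (a j : ℝ) • W (f j) := by
      funext i
      simp [castZ, hW, Pi.smul_apply, smul_eq_mul]
    rw [this, pairR_smul_right]
  -- the kernel is HperpSub
  have hker : HperpSub H = LinearMap.ker ψ := by
    apply le_antisymm
    · intro w hw
      rw [LinearMap.mem_ker]
      funext j
      have h1 : pairZ w (U j) = 0 := hw (U j) (hUH j)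
      rw [hUpair w j] at h1
      have h2 : pairR w (W (f j)) = 0 := by
        rcases mul_eq_zero.mp h1 with h | h
        · exact absurd (by exact_mod_cast h) (ha j)
        · exact h
      show (Φ w) (f j) = 0
      simpa [hΦ, LinearMap.pi_apply, pairLin_apply] using h2
    · intro w hw
      intro u hu
      have hj0 : ∀ j, pairZ w (U j) = 0 := by
        intro j
        rw [hUpair w j]
        have := congrFun (LinearMap.mem_ker.mp hw) j
        have h2 : pairR w (W (f j)) = 0 := by
          simpa [hψ, hΦ, LinearMap.funLeft_apply, LinearMap.pi_apply, pairLin_apply] using this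
        rw [h2, mul_zero]
      -- expand u in terms of the basis bN
      have hu' : (⟨u, mem_toIntSubmodule'.2 hu⟩ : HS) ∈ (⊤ : Submodule ℤ HS) :=
        Submodule.mem_top
      have hrepr := Module.Basis.sum_repr bN ⟨u, mem_toIntSubmodule'.2 hu⟩
      have hcoe : u = ∑ j, (bN.repr ⟨u, mem_toIntSubmodule'.2 hu⟩ j) • U j := by
        have h1 := congrArg (Subtype.val) hrepr
        simp only [Submodule.coe_sum, Submodule.coe_smul] at h1
        exact h1.symm
      rw [hcoe]
      show pairZHom w (∑ j, (bN.repr ⟨u, mem_toIntSubmodule'.2 hu⟩ j) • U j) = 0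
      rw [map_sum (pairZHom w) _ Finset.univ]
      refine Finset.sum_eq_zero fun j _ => ?_
      show pairZ w (_ • U j) = 0
      rw [pairZ_zsmul_right, hj0 j, mul_zero]
  -- conclude
  refine ⟨h, U, hrank.symm, hhn, hUH, ?_, ?_⟩
  · intro x hx u hu
    have hxk : x ∈ HperpSub H := by
      rw [hker, LinearMap.mem_ker]
      funext j
      have h1 := hx j
      rw [hUpair x j] at h1
      have h2 : pairR x (W (f j)) = 0 := by
        rcases mul_eq_zero.mp h1 with h | h
        · exact absurd (by exact_mod_cast h) (ha j)
        · exact h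
      show (Φ x) (f j) = 0
      simpa [hΦ, LinearMap.pi_apply, pairLin_apply] using h2
    exact hxk u hu
  · have := LinearMap.finrank_range_add_finrank_ker ψ
    rw [LinearMap.range_eq_top.mpr hψsurj] at this
    rw [hker]
    have h1 : Module.finrank ℝ (⊤ : Submodule ℝ (Fin h → ℝ)) = h := by
      rw [finrank_top]
      simp [Module.finrank_pi]
    have h2 : Module.finrank ℝ (Fin n → ℝ) = n := by simp [Module.finrank_pi]
    omega
end Duality

section Helpers

open Finset

variable {n : ℕ}

lemma pairZ_add_left (x y : Fin n → ℝ) (u : Fin n → ℤ) :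
    pairZ (x + y) u = pairZ x u + pairZ y u := by
  rw [pairZ_eq_pairR, pairZ_eq_pairR, pairZ_eq_pairR, ← pairLin_apply, map_add]; rfl

lemma pairZ_smul_left (c : ℝ) (x : Fin n → ℝ) (u : Fin n → ℤ) :
    pairZ (c • x) u = c * pairZ x u := by
  rw [pairZ_eq_pairR, pairZ_eq_pairR, ← pairLin_apply, map_smul]; rfl

lemma pairZ_sub_left (x y : Fin n → ℝ) (u : Fin n → ℤ) :
    pairZ (x - y) u = pairZ x u - pairZ y u := by
  have : x - y + y = x := sub_add_cancel x y
  have h := pairZ_add_left (x - y) y u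
  rw [this] at h
  linarith

lemma pairZ_convex (a b : ℝ) (z y : Fin n → ℝ) (u : Fin n → ℤ) :
    pairZ (a • z + b • y) u = a * pairZ z u + b * pairZ y u := by
  rw [pairZ_add_left, pairZ_smul_left, pairZ_smul_left]

lemma pairZ_single (x : Fin n → ℝ) (i : Fin n) :
    pairZ x (Pi.single i 1) = x i := by
  rw [pairZ]
  rw [Finset.sum_eq_single i]
  · simp
  · intro j _ hj
    rw [Pi.single_eq_of_ne hj]
    simp
  · simp

lemma exists_gamma_gt (Γ : AddSubgroup ℝ) (hΓ : Γ ≠ ⊥) (t : ℝ) : ∃ γ ∈ Γ, t < γ := by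
  obtain ⟨g, hg, hg0⟩ : ∃ g ∈ Γ, g ≠ 0 := by
    by_contra h
    push_neg at h
    exact hΓ ((AddSubgroup.eq_bot_iff_forall Γ).mpr h)
  have habs : |g| ∈ Γ ∧ 0 < |g| := by
    refine ⟨?_, abs_pos.mpr hg0⟩
    rcases abs_cases g with ⟨h1, _⟩ | ⟨h1, _⟩
    · rw [h1]; exact hg
    · rw [h1]; exact Γ.neg_mem hg
  obtain ⟨m, hm⟩ := exists_nat_gt (t / |g|)
  refine ⟨m • |g|, AddSubgroup.nsmul_mem Γ habs.1 m, ?_⟩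
  rw [nsmul_eq_mul]
  calc t = t / |g| * |g| := by field_simp
    _ < m * |g| := by exact mul_lt_mul_of_pos_right hm habs.2

lemma exists_uniform_eps {q : ℕ} (e : Fin q → ℝ) (he : ∀ l, 0 < e l) :
    ∃ ε : ℝ, 0 < ε ∧ ∀ l, ε ≤ e l := by
  classical
  set s : Finset ℝ := insert (1:ℝ) (Finset.image e Finset.univ) with hsdef
  have hne : s.Nonempty := ⟨1, Finset.mem_insert_self _ _⟩
  refine ⟨s.min' hne, ?_, ?_⟩
  · have := s.min'_mem hne
    rcases Finset.mem_insert.mp this with h | h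
    · rw [h]; norm_num
    · obtain ⟨l, _, hl⟩ := Finset.mem_image.mp h
      rw [← hl]; exact he l
  · intro l
    exact s.min'_le _ (Finset.mem_insert_of_mem (Finset.mem_image_of_mem e (Finset.mem_univ l)))

lemma exists_strict_point {q : ℕ} (u : Fin q → (Fin n → ℤ)) (γ : Fin q → ℝ)
    (Q : Set (Fin n → ℝ)) (hQeq : Q = {x | ∀ l, pairZ x (u l) ≤ γ l})
    {z0 : Fin n → ℝ} (hz0 : z0 ∈ Q) (s : Finset (Fin q)) :
    (∀ l ∈ s, ∃ y ∈ Q, pairZ y (u l) < γ l) →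
    ∃ z ∈ Q, ∀ l ∈ s, pairZ z (u l) < γ l := by
  classical
  induction s using Finset.induction_on with
  | empty =>
    intro _
    exact ⟨z0, hz0, fun l hl => absurd hl (Finset.notMem_empty l)⟩
  | @insert a s ha ih =>
    intro hs
    obtain ⟨z, hzQ, hzs⟩ := ih fun l hl => hs l (Finset.mem_insert_of_mem hl)
    obtain ⟨y, hyQ, hya⟩ := hs a (Finset.mem_insert_self a s)
    have hconv : Convex ℝ Q := hQeq ▸ convex_gammaRat u γ
    refine ⟨(1/2 : ℝ) • z + (1/2 : ℝ) • y,
      hconv hzQ hyQ (by norm_num) (by norm_num) (by norm_num), ?_⟩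
    intro l hl
    rw [pairZ_convex]
    have hzle : pairZ z (u l) ≤ γ l := by rw [hQeq] at hzQ; exact hzQ l
    have hyle : pairZ y (u l) ≤ γ l := by rw [hQeq] at hyQ; exact hyQ l
    rcases Finset.mem_insert.mp hl with h | h
    · subst h
      linarith
    · have := hzs l h
      linarith

end Helpers

section LowerBound

open Finset

lemma lower_bound {n k : ℕ} (Γ : AddSubgroup ℝ)
    {P : ℕ → Set (Fin n → ℝ)} (hP : IsFlagOfPolyhedra n k P)
    {v : Fin (k+1) → ℝ × (Fin n → ℝ)} (hv : LinearIndependent ℝ v)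
    (hC : ∀ i ≤ k, closedConeOver (P i) = coneGenUpTo v i)
    {ξ0 : Fin n → ℝ} (hξ0 : P 0 = {ξ0})
    {ζ : ℕ → (Fin n → ℝ)} (hζ : ∀ i, 1 ≤ i → i ≤ k → ζ i ∈ P i \ P (i - 1))
    (H : AddSubgroup (Fin n → ℤ))
    (hH : ∀ u : Fin n → ℤ, u ∈ H ↔
      (pairZ ξ0 u ∈ Γ ∧ ∀ i, 1 ≤ i → i ≤ k → pairZ (ζ i) u = pairZ ξ0 u))
    {Q : Set (Fin n → ℝ)} (hQ : IsGammaRatNbhd Γ k P Q) :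
    Module.finrank ℝ (HperpSub H) ≤ polyDim Q := by
  classical
  obtain ⟨⟨q, u, γ, hγΓ, hQeq⟩, hnbhd⟩ := hQ
  -- choose relative interior points
  set Y : ℕ → (Fin n → ℝ) := fun i => if h : i ≤ k then (hnbhd i h).choose else ξ0 with hYdef
  have hY : ∀ i, (hik : i ≤ k) → Y i ∈ Q ∧ Y i ∈ intrinsicInterior ℝ (P i) := by
    intro i hik
    have := (hnbhd i hik).choose_spec
    rw [hYdef]
    simp only [dif_pos hik]
    exact this
  have hY0 : Y 0 = ξ0 := by
    have := (hY 0 (Nat.zero_le k)).2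
    rw [hξ0, intrinsicInterior_singleton] at this
    exact this
  have hξQ : ξ0 ∈ Q := hY0 ▸ (hY 0 (Nat.zero_le k)).1
  -- active constraints give elements of H
  have hactive : ∀ l : Fin q, (∀ x ∈ Q, pairZ x (u l) = γ l) → u l ∈ H := by
    intro l hl
    rw [hH]
    constructor
    · rw [hl ξ0 hξQ]
      exact hγΓ l
    · intro i h1 hik
      set F := pairLin (castZ (u l)) with hF
      have hyP : ∀ m, 1 ≤ m → m ≤ k → Y m ∈ P m ∧ Y m ∉ affineSpan ℝ (P (m-1)) := by
        intro m h1m hmk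
        exact ⟨intrinsicInterior_subset (hY m hmk).2,
          relint_not_mem_affineSpan hP hv hC h1m hmk (hζ m h1m hmk).1 (hζ m h1m hmk).2
            (hY m hmk).2⟩
      have hfY : ∀ m ≤ k, F (Y m) = F ξ0 := by
        intro m hmk
        show pairR (Y m) (castZ (u l)) = pairR ξ0 (castZ (u l))
        rw [← pairZ_eq_pairR, ← pairZ_eq_pairR, hl (Y m) (hY m hmk).1, hl ξ0 hξQ]
      have hconst := const_on_affineSpan hP hξ0 Y hY0 hyP F hfY
      have hζk : ζ i ∈ affineSpan ℝ (P k) :=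
        subset_affineSpan ℝ _ (flag_mono hP hik le_rfl (hζ i h1 hik).1)
      have := hconst k le_rfl (ζ i) hζk
      show pairZ (ζ i) (u l) = pairZ ξ0 (u l)
      rw [pairZ_eq_pairR, pairZ_eq_pairR]
      exact this
  -- a point where all non-active constraints are strict
  set s : Finset (Fin q) := Finset.univ.filter (fun l => ¬ ∀ x ∈ Q, pairZ x (u l) = γ l)
    with hsdef
  have hs : ∀ l ∈ s, ∃ y ∈ Q, pairZ y (u l) < γ l := by
    intro l hl
    have := (Finset.mem_filter.mp hl).2
    push_neg at this
    obtain ⟨y, hy, hne⟩ := this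
    have hle : pairZ y (u l) ≤ γ l := by rw [hQeq] at hy; exact hy l
    exact ⟨y, hy, lt_of_le_of_ne hle hne⟩
  obtain ⟨z, hzQ, hzs⟩ := exists_strict_point u γ Q hQeq hξQ s hs
  -- the perpendicular space is inside the direction of the affine span of Q
  have hdir : HperpSub H ≤ (affineSpan ℝ Q).direction := by
    intro w hw
    have hex : ∀ l : Fin q, ∃ e : ℝ, 0 < e ∧
        ∀ δ : ℝ, 0 ≤ δ → δ ≤ e → pairZ (z + δ • w) (u l) ≤ γ l := by
      intro l
      have hzl : pairZ z (u l) ≤ γ l := by rw [hQeq] at hzQ; exact hzQ l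
      have hlin : ∀ δ : ℝ, pairZ (z + δ • w) (u l) = pairZ z (u l) + δ * pairZ w (u l) := by
        intro δ
        rw [pairZ_add_left, pairZ_smul_left]
      by_cases hact : ∀ x ∈ Q, pairZ x (u l) = γ l
      · have h0 : pairZ w (u l) = 0 := hw (u l) (hactive l hact)
        exact ⟨1, one_pos, fun δ _ _ => by rw [hlin δ, h0, mul_zero, add_zero]; exact hzl⟩
      · have hstrict : pairZ z (u l) < γ l :=
          hzs l (Finset.mem_filter.mpr ⟨Finset.mem_univ l, hact⟩)
        set c := pairZ w (u l) with hc
        refine ⟨(γ l - pairZ z (u l)) / (|c| + 1),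
          div_pos (by linarith) (by positivity), fun δ h1 h2 => ?_⟩
        rw [hlin δ]
        have hd1 : δ * c ≤ δ * |c| := mul_le_mul_of_nonneg_left (le_abs_self c) h1
        have hd3 : δ * |c| ≤ (γ l - pairZ z (u l)) / (|c| + 1) * |c| :=
          mul_le_mul_of_nonneg_right h2 (abs_nonneg c)
        have hd4 : (γ l - pairZ z (u l)) / (|c| + 1) * |c| ≤ γ l - pairZ z (u l) := by
          rw [div_mul_eq_mul_div, div_le_iff₀ (by positivity)]
          nlinarith [abs_nonneg c]
        linarith
    choose e he hprop using hex
    obtain ⟨ε, hε, hεle⟩ := exists_uniform_eps e he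
    have hz2 : z + ε • w ∈ Q := by
      rw [hQeq]
      intro l
      exact hprop l ε hε.le (hεle l)
    have hmem : ε • w ∈ (affineSpan ℝ Q).direction := by
      have := AffineSubspace.vsub_mem_direction (subset_affineSpan ℝ _ hz2)
        (subset_affineSpan ℝ _ hzQ)
      simpa [vsub_eq_sub, add_sub_cancel_left] using this
    have := Submodule.smul_mem ((affineSpan ℝ Q).direction) ε⁻¹ hmem
    simpa [smul_smul, inv_mul_cancel₀ hε.ne'] using this
  exact Submodule.finrank_mono hdir

end LowerBound

section Construction

open Finset

lemma construction {n k : ℕ} (Γ : AddSubgroup ℝ) (hΓ : Γ ≠ ⊥)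
    {P : ℕ → Set (Fin n → ℝ)} (hP : IsFlagOfPolyhedra n k P)
    {v : Fin (k+1) → ℝ × (Fin n → ℝ)} (hv : LinearIndependent ℝ v)
    (hC : ∀ i ≤ k, closedConeOver (P i) = coneGenUpTo v i)
    {ξ0 : Fin n → ℝ} (hξ0 : P 0 = {ξ0})
    {ζ : ℕ → (Fin n → ℝ)} (hζ : ∀ i, 1 ≤ i → i ≤ k → ζ i ∈ P i \ P (i - 1))
    (H : AddSubgroup (Fin n → ℤ))
    (hH : ∀ u : Fin n → ℤ, u ∈ H ↔
      (pairZ ξ0 u ∈ Γ ∧ ∀ i, 1 ≤ i → i ≤ k → pairZ (ζ i) u = pairZ ξ0 u))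
    (h' : ℕ) (U : Fin h' → (Fin n → ℤ)) (hUH : ∀ j, U j ∈ H)
    (hUgen : ∀ x : Fin n → ℝ, (∀ j, pairZ x (U j) = 0) → ∀ u ∈ H, pairZ x u = 0) :
    ∃ Q : Set (Fin n → ℝ), IsGammaRatNbhd Γ k P Q ∧
      (affineSpan ℝ Q).direction = HperpSub H := by
  classical
  -- choose relative interior points
  have hrne : ∀ i, i ≤ k → (intrinsicInterior ℝ (P i)).Nonempty := fun i hik =>
    Set.Nonempty.intrinsicInterior ((hP.1 i hik).2.1.convex) ((hP.1 i hik).1)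
  set Y : ℕ → (Fin n → ℝ) := fun i => if h : i ≤ k then (hrne i h).choose else ξ0 with hYdef
  have hY : ∀ i, (hik : i ≤ k) → Y i ∈ intrinsicInterior ℝ (P i) := by
    intro i hik
    have := (hrne i hik).choose_spec
    rw [hYdef]; simp only [dif_pos hik]; exact this
  have hY0 : Y 0 = ξ0 := by
    have := hY 0 (Nat.zero_le k)
    rw [hξ0, intrinsicInterior_singleton] at this
    exact this
  -- a bound for all the points
  set t : ℝ := (Finset.range (k+1)).sup' ⟨0, Finset.mem_range.mpr (by omega)⟩
    (fun i => ‖Y i‖) with htdef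
  have htY : ∀ i, i ≤ k → ‖Y i‖ ≤ t := by
    intro i hik
    exact Finset.le_sup' (fun i => ‖Y i‖) (Finset.mem_range.mpr (by omega))
  obtain ⟨g, hgΓ, hgt⟩ := exists_gamma_gt Γ hΓ t
  have htξ : ‖ξ0‖ ≤ t := hY0 ▸ htY 0 (Nat.zero_le k)
  -- the constraint system
  set ι := (Fin h' ⊕ Fin h') ⊕ (Fin n ⊕ Fin n) with hι
  set G : ι → (Fin n → ℤ) := Sum.elim (Sum.elim U (fun j => -U j))
    (Sum.elim (fun i => Pi.single i 1) (fun i => -Pi.single i 1)) with hG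
  set Γg : ι → ℝ := Sum.elim (Sum.elim (fun j => pairZ ξ0 (U j)) (fun j => -pairZ ξ0 (U j)))
    (Sum.elim (fun _ => g) (fun _ => g)) with hΓg
  set Q : Set (Fin n → ℝ) := {x | ∀ m : ι, pairZ x (G m) ≤ Γg m} with hQdef
  -- characterization of membership in Q
  have hQchar : ∀ x, x ∈ Q ↔
      ((∀ j, pairZ x (U j) = pairZ ξ0 (U j)) ∧ (∀ i, |x i| ≤ g)) := by
    intro x
    constructor
    · intro hx
      constructor
      · intro j
        have h1 := hx (Sum.inl (Sum.inl j))
        have h2 := hx (Sum.inl (Sum.inr j))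
        simp only [hG, hΓg, Sum.elim_inl, Sum.elim_inr] at h1 h2
        rw [pairZ_neg_right] at h2
        linarith
      · intro i
        have h1 := hx (Sum.inr (Sum.inl i))
        have h2 := hx (Sum.inr (Sum.inr i))
        simp only [hG, hΓg, Sum.elim_inl, Sum.elim_inr] at h1 h2
        rw [pairZ_neg_right, pairZ_single] at h2
        rw [pairZ_single] at h1
        rw [abs_le]
        exact ⟨by linarith, h1⟩
    · rintro ⟨h1, h2⟩ m
      rcases m with (j|j)|(i|i) <;> simp only [hG, hΓg, Sum.elim_inl, Sum.elim_inr]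
      · rw [h1 j]
      · rw [pairZ_neg_right, h1 j]
      · rw [pairZ_single]
        exact (abs_le.mp (h2 i)).2
      · rw [pairZ_neg_right, pairZ_single]
        linarith [(abs_le.mp (h2 i)).1]
  -- the equality constraints hold on the affine span of P k
  have hconstz : ∀ (j : Fin h') (x : Fin n → ℝ), x ∈ affineSpan ℝ (P k) →
      pairZ x (U j) = pairZ ξ0 (U j) := by
    intro j x hx
    set y : ℕ → (Fin n → ℝ) := fun i => if i = 0 then ξ0 else ζ i with hydef
    have hy0 : y 0 = ξ0 := by simp [hydef]
    have hyP : ∀ i, 1 ≤ i → i ≤ k → y i ∈ P i ∧ y i ∉ affineSpan ℝ (P (i-1)) := by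
      intro i h1 hik
      have hyi : y i = ζ i := by simp [hydef]; omega
      rw [hyi]
      exact ⟨(hζ i h1 hik).1,
        zeta_not_mem_affineSpan hP hv hC h1 hik (hζ i h1 hik).1 (hζ i h1 hik).2⟩
    set F := pairLin (castZ (U j)) with hF
    have hfY : ∀ m ≤ k, F (y m) = F ξ0 := by
      intro m hmk
      by_cases hm : m = 0
      · rw [hm]; simp [hydef]
      · have hyi : y m = ζ m := by simp [hydef, hm]
        rw [hyi]
        show pairR (ζ m) (castZ (U j)) = pairR ξ0 (castZ (U j))
        rw [← pairZ_eq_pairR, ← pairZ_eq_pairR]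
        exact ((hH (U j)).mp (hUH j)).2 m (by omega) hmk
    have := const_on_affineSpan hP hξ0 y hy0 hyP F hfY k le_rfl x hx
    show pairZ x (U j) = pairZ ξ0 (U j)
    rw [pairZ_eq_pairR, pairZ_eq_pairR]
    exact this
  -- ξ0 ∈ Q
  have hξQ : ξ0 ∈ Q := by
    rw [hQchar]
    refine ⟨fun j => rfl, fun i => ?_⟩
    calc |ξ0 i| ≤ ‖ξ0‖ := by
          rw [← Real.norm_eq_abs]; exact norm_le_pi_norm ξ0 i
      _ ≤ t := htξ
      _ ≤ g := hgt.le
  -- Q is a Γ-rational neighborhood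
  have hnbhd : IsGammaRatNbhd Γ k P Q := by
    constructor
    · -- Γ-rational polyhedron
      set e : ι ≃ Fin ((h' + h') + (n + n)) :=
        (Equiv.sumCongr finSumFinEquiv finSumFinEquiv).trans finSumFinEquiv with hedef
      refine ⟨(h' + h') + (n + n), fun l => G (e.symm l), fun l => Γg (e.symm l), ?_, ?_⟩
      · intro l
        rcases hsl : e.symm l with (j|j)|(i|i) <;>
          simp only [hΓg, hsl, Sum.elim_inl, Sum.elim_inr]
        · exact ((hH (U j)).mp (hUH j)).1
        · exact Γ.neg_mem ((hH (U j)).mp (hUH j)).1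
        · exact hgΓ
        · exact hgΓ
      · ext x
        constructor
        · intro hx l
          exact hx (e.symm l)
        · intro hx m
          have := hx (e m)
          simpa using this
    · -- meets all the relative interiors
      intro i hik
      refine ⟨Y i, ?_, hY i hik⟩
      rw [hQchar]
      constructor
      · intro j
        refine hconstz j (Y i) ?_
        exact subset_affineSpan ℝ _
          (flag_mono hP hik le_rfl (intrinsicInterior_subset (hY i hik)))
      · intro i'
        calc |Y i i'| ≤ ‖Y i‖ := by
              rw [← Real.norm_eq_abs]; exact norm_le_pi_norm (Y i) i'
          _ ≤ t := htY i hik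
          _ ≤ g := hgt.le
  -- direction computation
  refine ⟨Q, hnbhd, le_antisymm ?_ ?_⟩
  · -- direction ≤ Hperp
    have hQsub : Q ⊆ (AffineSubspace.mk' ξ0 (HperpSub H) : Set (Fin n → ℝ)) := by
      intro x hx
      rw [AffineSubspace.mem_coe, AffineSubspace.mem_mk']
      show x - ξ0 ∈ HperpSub H
      refine hUgen (x - ξ0) (fun j => ?_)
      rw [pairZ_sub_left, ((hQchar x).mp hx).1 j, sub_self]
    have hle := affineSpan_le.mpr hQsub
    have := AffineSubspace.direction_le hle
    rwa [AffineSubspace.direction_mk'] at this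
  · -- Hperp ≤ direction
    intro w hw
    set ε : ℝ := (g - t) / (‖w‖ + 1) with hεdef
    have hε : 0 < ε := div_pos (by linarith) (by positivity)
    have hmem2 : ξ0 + ε • w ∈ Q := by
      rw [hQchar]
      constructor
      · intro j
        rw [pairZ_add_left, pairZ_smul_left, hw (U j) (hUH j), mul_zero, add_zero]
      · intro i
        have h1 : |ξ0 i| ≤ t := le_trans (by rw [← Real.norm_eq_abs]; exact norm_le_pi_norm ξ0 i) htξ
        have h2 : |w i| ≤ ‖w‖ := by rw [← Real.norm_eq_abs]; exact norm_le_pi_norm w i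
        have h3 : ε * ‖w‖ ≤ g - t := by
          rw [hεdef, div_mul_eq_mul_div, div_le_iff₀ (by positivity)]
          nlinarith [norm_nonneg w]
        have h4 : |(ξ0 + ε • w) i| ≤ |ξ0 i| + ε * |w i| := by
          have : (ξ0 + ε • w) i = ξ0 i + ε * w i := rfl
          rw [this]
          calc |ξ0 i + ε * w i| ≤ |ξ0 i| + |ε * w i| := abs_add_le _ _
            _ = |ξ0 i| + ε * |w i| := by rw [abs_mul, abs_of_pos hε]
        have h5 : ε * |w i| ≤ ε * ‖w‖ := mul_le_mul_of_nonneg_left h2 hε.le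
        linarith
    have hmem : ε • w ∈ (affineSpan ℝ Q).direction := by
      have := AffineSubspace.vsub_mem_direction (subset_affineSpan ℝ _ hmem2)
        (subset_affineSpan ℝ _ hξQ)
      simpa [vsub_eq_sub, add_sub_cancel_left] using this
    have := Submodule.smul_mem ((affineSpan ℝ Q).direction) ε⁻¹ hmem
    simpa [smul_smul, inv_mul_cancel₀ hε.ne'] using this

end Construction

/-- For a flag of polyhedra `P` with `c(P)` simplicial, `P 0 = {ξ0}` and
chosen `ζ i ∈ P i \ P (i-1)`, the minimum dimension of a `Γ`-rational polyhedron which is a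
`Γ`-rational neighborhood of the flag exists and equals `n - rank H`, where
`H = {u ∈ ℤⁿ : ⟨ξ0,u⟩ ∈ Γ and ⟨ζ i,u⟩ = ⟨ξ0,u⟩ for 1 ≤ i ≤ k}`. -/
theorem min_dim_of_rational_nbhds
    (n k : ℕ) (hn : 1 ≤ n) (Γ : AddSubgroup ℝ) (hΓ : Γ ≠ ⊥)
    (P : ℕ → Set (Fin n → ℝ)) (hP : IsFlagOfPolyhedra n k P)
    (hsimp : IsSimplicialFlagOfCones n k (fun i => closedConeOver (P i)))
    (ξ0 : Fin n → ℝ) (hξ0 : P 0 = {ξ0})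
    (ζ : ℕ → (Fin n → ℝ)) (hζ : ∀ i, 1 ≤ i → i ≤ k → ζ i ∈ P i \ P (i - 1))
    (H : AddSubgroup (Fin n → ℤ))
    (hH : ∀ u : Fin n → ℤ, u ∈ H ↔
      (pairZ ξ0 u ∈ Γ ∧ ∀ i, 1 ≤ i → i ≤ k → pairZ (ζ i) u = pairZ ξ0 u)) :
    IsLeast {d : ℕ | ∃ Q : Set (Fin n → ℝ), IsGammaRatNbhd Γ k P Q ∧ d = polyDim Q}
      (n - Module.finrank ℤ H) := by
  classical
  obtain ⟨hflag, v, hv, hC⟩ := hsimp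
  have hC' : ∀ i ≤ k, closedConeOver (P i) = coneGenUpTo v i := hC
  obtain ⟨h', U, hh', hhn, hUH, hUgen, hdim⟩ := exists_gens H
  constructor
  · obtain ⟨Q, hQ, hQdir⟩ := construction Γ hΓ hP hv hC' hξ0 hζ H hH h' U hUH hUgen
    refine ⟨Q, hQ, ?_⟩
    have h1 : polyDim Q = Module.finrank ℝ (HperpSub H) := by
      show Module.finrank ℝ (affineSpan ℝ Q).direction = _
      rw [hQdir]
    omega
  · rintro d ⟨Q, hQ, rfl⟩
    have hlow := lower_bound Γ hP hv hC' hξ0 hζ H hH hQ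
    omega

end
end
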